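/- arXiv:2503.02990 — 3 statements merged into one kernel-verified Lean document; each statement's English description precedes it below -/
import Mathlib

section
/- For any positive integers m and n, E_{𝔖_{n,r}}[X₁X₂⋯X_n] = E_{𝔖_{m+n,r}}[X_{m+1}X_{m+2}⋯X_{m+n}]; that is, the probability a uniformly random element of 𝔖_{n,r} has descents at every position in [n] equals the probability a uniformly random element of 𝔖_{m+n,r} has descents at every position in {m+1,…,m+n}. Both equal ((r-1)/r)^n / n!. -/
open scoped Classical BigOperators

namespace ColoredPerm

/-- A colored permutation: a pair of a permutation of `Fin n` and a coloring. -/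
abbrev CP (n r : ℕ) := Equiv.Perm (Fin n) × (Fin n → ZMod r)

/-- Index `i : Fin n` represents position `i+1 ∈ [n]`.  Descent at position `i+1`. -/
def IsDescent {n r : ℕ} (σ : CP n r) (i : Fin n) : Prop :=
  if h : (i : ℕ) + 1 < n then
    (σ.2 ⟨(i : ℕ) + 1, h⟩).val < (σ.2 i).val ∨
      (σ.2 i = σ.2 ⟨(i : ℕ) + 1, h⟩ ∧ σ.1 ⟨(i : ℕ) + 1, h⟩ < σ.1 i)
  else (σ.2 i).val ≠ 0

/-- Descent indicator. -/
noncomputable def X {n r : ℕ} (i : Fin n) (σ : CP n r) : ℚ :=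
  if IsDescent σ i then 1 else 0

/-- Color indicator `Y_{i,c}`. -/
noncomputable def Y {n r : ℕ} (i : Fin n) (c : ZMod r) (σ : CP n r) : ℚ :=
  if σ.2 i = c then 1 else 0

noncomputable def des {n r : ℕ} (σ : CP n r) : ℕ :=
  (Finset.univ.filter (fun i => IsDescent σ i)).card

/-- Major index: sum of descent positions lying in `[n-1]`. -/
noncomputable def maj {n r : ℕ} (σ : CP n r) : ℕ :=
  ∑ i ∈ Finset.univ.filter (fun i : Fin n => IsDescent σ i ∧ (i : ℕ) + 1 < n),
    ((i : ℕ) + 1)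

def col {n r : ℕ} (σ : CP n r) : ℕ := ∑ i, (σ.2 i).val

noncomputable def fmaj {n r : ℕ} (σ : CP n r) : ℕ := r * maj σ + col σ

/-- Ordinary descent of a permutation of `Fin n` at position `i+1` (no descent at last position). -/
def IsDescentS {n : ℕ} (w : Equiv.Perm (Fin n)) (i : Fin n) : Prop :=
  if h : (i : ℕ) + 1 < n then w ⟨(i : ℕ) + 1, h⟩ < w i else False

noncomputable def XS {n : ℕ} (i : Fin n) (w : Equiv.Perm (Fin n)) : ℚ :=
  if IsDescentS w i then 1 else 0

noncomputable def majS {n : ℕ} (w : Equiv.Perm (Fin n)) : ℕ :=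
  ∑ i ∈ Finset.univ.filter (fun i : Fin n => IsDescentS w i ∧ (i : ℕ) + 1 < n),
    ((i : ℕ) + 1)

/-- Expectation of `f` under the uniform distribution on a finite set `S`. -/
noncomputable def E {α : Type*} (S : Finset α) (f : α → ℚ) : ℚ :=
  (∑ x ∈ S, f x) / S.card

/-- Group multiplication of the wreath product `ℤ_r ≀ 𝔖_n`. -/
def cmul {n r : ℕ} (x y : CP n r) : CP n r :=
  (x.1 * y.1, fun i => x.2 (y.1 i) + y.2 i)

/-- Inverse in the wreath product. -/
def cinv {n r : ℕ} (x : CP n r) : CP n r :=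
  (x.1⁻¹, fun i => - x.2 (x.1⁻¹ i))

/-- Conjugacy in the colored permutation group. -/
def IsConjCP {n r : ℕ} (x y : CP n r) : Prop :=
  ∃ g : CP n r, cmul (cmul g x) (cinv g) = y

/-- The elements in the same cycle of `σ` as `i`. -/
noncomputable def cycleSet {n r : ℕ} (σ : CP n r) (i : Fin n) : Finset (Fin n) :=
  Finset.univ.filter (fun x => σ.1.SameCycle i x)

/-- The number of cycles of `σ` of length `ℓ` whose colors sum to `j`. -/
noncomputable def cycleCount {n r : ℕ} (σ : CP n r) (ℓ : ℕ) (j : ZMod r) : ℕ :=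
  (Finset.univ.filter (fun i : Fin n =>
      (cycleSet σ i).card = ℓ ∧ (∑ x ∈ cycleSet σ i, σ.2 x) = j)).card / ℓ

/-- `σ` has no cycle of length `ℓ`. -/
def NoCycleOfLength {n r : ℕ} (σ : CP n r) (ℓ : ℕ) : Prop :=
  ∀ i : Fin n, (cycleSet σ i).card ≠ ℓ

/-- `C` is a conjugacy class of `𝔖_{n,r}`. -/
def IsConjClass {n r : ℕ} [NeZero r] (C : Finset (CP n r)) : Prop :=
  ∃ σ₀ : CP n r, C = Finset.univ.filter (fun σ => IsConjCP σ₀ σ)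

/-- `C` has no cycles of lengths `1, 2, …, m`. -/
def NoShortCycles {n r : ℕ} (C : Finset (CP n r)) (m : ℕ) : Prop :=
  ∀ σ ∈ C, ∀ ℓ, 1 ≤ ℓ → ℓ ≤ m → NoCycleOfLength σ ℓ

/-- The relation identifying `a_i` with `a_i + 1` (on indices: `a i` with the index of
value `(a i) + 1`, when it exists). -/
def adjRel {n k : ℕ} (a : Fin k → Fin n) (p q : Fin n) : Prop :=
  (∃ i, a i = p) ∧ (q : ℕ) = (p : ℕ) + 1

/-- Being in the same block induced by `a`. -/
def SameBlock {n k : ℕ} (a : Fin k → Fin n) (p q : Fin n) : Prop :=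
  Relation.EqvGen (adjRel a) p q

/-- The block containing `p`. -/
noncomputable def blockOf {n k : ℕ} (a : Fin k → Fin n) (p : Fin n) : Finset (Fin n) :=
  Finset.univ.filter (fun q => SameBlock a p q)

/-- The set of blocks induced by `a`. -/
noncomputable def blocks {n k : ℕ} (a : Fin k → Fin n) : Finset (Finset (Fin n)) :=
  Finset.univ.image (blockOf a)

/-- `∏_i 1/|𝓑_i|!` over the blocks induced by `a`. -/
noncomputable def blockProd {n k : ℕ} (a : Fin k → Fin n) : ℚ :=
  ∏ b ∈ blocks a, (1 : ℚ) / (Nat.factorial b.card)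

end ColoredPerm

namespace ColoredPerm

noncomputable def ER {α : Type*} (S : Finset α) (f : α → ℝ) : ℝ :=
  (∑ x ∈ S, f x) / S.card

noncomputable def XR {n r : ℕ} (i : Fin n) (σ : CP n r) : ℝ :=
  if IsDescent σ i then 1 else 0

noncomputable def XSR {n : ℕ} (i : Fin n) (w : Equiv.Perm (Fin n)) : ℝ :=
  if IsDescentS w i then 1 else 0

end ColoredPerm

namespace CPAux
open ColoredPerm Finset

/-- the lex key of a position -/
def key {N r : ℕ} (σ : CP N r) (i : Fin N) : ℕ ×ₗ Fin N := toLex ((σ.2 i).val, σ.1 i)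

lemma isDescent_iff_key {N r : ℕ} [NeZero r] (σ : CP N r) (i : Fin N) (h : (i : ℕ) + 1 < N) :
    IsDescent σ i ↔ key σ ⟨(i : ℕ) + 1, h⟩ < key σ i := by
  simp only [IsDescent, dif_pos h, key, Prod.Lex.lt_iff]
  constructor
  · rintro (h1 | ⟨h1, h2⟩)
    · exact Or.inl h1
    · exact Or.inr ⟨by rw [h1]; rfl, h2⟩
  · rintro (h1 | ⟨h1, h2⟩)
    · exact Or.inl h1
    · exact Or.inr ⟨(ZMod.val_injective r h1).symm, h2⟩

lemma isDescent_last_iff {N r : ℕ} [NeZero r] (σ : CP N r) (i : Fin N)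
    (h : ¬ ((i : ℕ) + 1 < N)) : IsDescent σ i ↔ σ.2 i ≠ 0 := by
  simp only [IsDescent, dif_neg h, Ne, ZMod.val_eq_zero]

lemma key_chain {N m r : ℕ} [NeZero r] {σ : CP N r}
    (hσ : ∀ i : Fin N, m ≤ (i : ℕ) → IsDescent σ i) {p : Fin N} (hp : m ≤ (p : ℕ)) :
    ∀ qv (hqv : qv < N), (p : ℕ) < qv → key σ ⟨qv, hqv⟩ < key σ p := by
  intro qv
  induction qv with
  | zero => omega
  | succ t ih =>
    intro hqv hlt
    have ht : t < N := by omega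
    have hd : IsDescent σ ⟨t, ht⟩ := hσ ⟨t, ht⟩ (by simp; omega)
    have hkey : key σ ⟨t + 1, hqv⟩ < key σ ⟨t, ht⟩ := by
      have := (isDescent_iff_key σ ⟨t, ht⟩ hqv).mp hd
      exact this
    rcases Nat.lt_or_ge (p : ℕ) t with h1 | h1
    · exact lt_trans hkey (ih ht h1)
    · have : (p : ℕ) = t := by omega
      have : p = ⟨t, ht⟩ := Fin.ext this
      rw [this]
      exact hkey

lemma colors_ne_zero {N m r : ℕ} [NeZero r] {σ : CP N r}
    (hσ : ∀ i : Fin N, m ≤ (i : ℕ) → IsDescent σ i) {p : Fin N} (hp : m ≤ (p : ℕ)) :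
    σ.2 p ≠ 0 := by
  have hN : 0 < N := p.pos
  set L : Fin N := ⟨N - 1, by omega⟩ with hL
  have hLd : IsDescent σ L := hσ L (by simp [hL]; omega)
  have hLne : σ.2 L ≠ 0 := by
    rw [isDescent_last_iff σ L (by simp [hL]; omega)] at hLd
    exact hLd
  rcases Nat.lt_or_ge (p : ℕ) (N - 1) with h1 | h1
  · have hkey : key σ ⟨N - 1, by omega⟩ < key σ p := key_chain hσ hp (N - 1) (by omega) h1
    rw [key, key, Prod.Lex.lt_iff] at hkey
    rcases hkey with h2 | ⟨h2, _⟩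
    · intro h0
      rw [h0] at h2
      simp [ZMod.val_zero] at h2
    · intro h0
      apply hLne
      have : σ.2 L = σ.2 p := ZMod.val_injective r h2
      rw [this, h0]
  · have hplt := p.isLt
    have : p = L := Fin.ext (by simp only [hL]; omega)
    rw [this]; exact hLne


lemma strictAnti_unique {α : Type*} [LinearOrder α] {n : ℕ} {s : Finset α} (hs : s.card = n)
    {f g : Fin n → α} (hf : ∀ j, f j ∈ s) (hg : ∀ j, g j ∈ s)
    (af : StrictAnti f) (ag : StrictAnti g) : f = g := by
  have hf' : StrictMono (f ∘ Fin.rev) := fun a b h => af (Fin.rev_lt_rev.mpr h)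
  have hg' : StrictMono (g ∘ Fin.rev) := fun a b h => ag (Fin.rev_lt_rev.mpr h)
  have e1 : f ∘ Fin.rev = s.orderEmbOfFin hs :=
    Finset.orderEmbOfFin_unique hs (fun x => hf _) hf'
  have e2 : g ∘ Fin.rev = s.orderEmbOfFin hs :=
    Finset.orderEmbOfFin_unique hs (fun x => hg _) hg'
  funext j
  have h1 := congrFun e1 (Fin.rev j)
  have h2 := congrFun e2 (Fin.rev j)
  simp only [Function.comp_apply, Fin.rev_rev] at h1 h2
  rw [h1, h2]

variable {m n r : ℕ}

def Bmap (σ : CP (m + n) r) : Fin m ↪ Fin (m + n) :=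
  ⟨fun i => σ.1 (Fin.castAdd n i), by
    intro a b h
    have h2 := σ.1.injective h
    have h3 := congrArg Fin.val h2
    simpa [Fin.ext_iff] using h3⟩

lemma compl_card (B : Fin m ↪ Fin (m + n)) :
    ((Finset.univ.map B)ᶜ : Finset (Fin (m + n))).card = n := by
  rw [Finset.card_compl, Finset.card_map, Finset.card_univ, Fintype.card_fin, Fintype.card_fin]
  omega

def cEnum (B : Fin m ↪ Fin (m + n)) : Fin n → Fin (m + n) :=
  fun j => ((Finset.univ.map B)ᶜ).orderEmbOfFin (compl_card B) j

lemma cEnum_mem (B : Fin m ↪ Fin (m + n)) (j : Fin n) :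
    cEnum B j ∈ ((Finset.univ.map B)ᶜ : Finset (Fin (m + n))) :=
  Finset.orderEmbOfFin_mem _ _ _

lemma cEnum_inj (B : Fin m ↪ Fin (m + n)) : Function.Injective (cEnum B) :=
  (Finset.orderEmbOfFin _ _).injective

lemma cEnum_surj (B : Fin m ↪ Fin (m + n)) :
    ∀ x ∈ ((Finset.univ.map B)ᶜ : Finset (Fin (m + n))), ∃ j, cEnum B j = x := by
  intro x hx
  have : x ∈ Set.range (((Finset.univ.map B)ᶜ).orderEmbOfFin (compl_card B)) := by
    rw [Finset.range_orderEmbOfFin]; exact_mod_cast hx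
  exact this

def Fmap (σ : CP (m + n) r) :
    (Fin m ↪ Fin (m + n)) × (Fin m → ZMod r) × (Fin n → ZMod r) :=
  (Bmap σ, fun i => σ.2 (Fin.castAdd n i), fun j => σ.2 (σ.1.symm (cEnum (Bmap σ) j)))

lemma mem_compl_iff (σ : CP (m + n) r) (x : Fin (m + n)) :
    x ∈ ((Finset.univ.map (Bmap σ))ᶜ : Finset (Fin (m + n))) ↔ m ≤ ((σ.1.symm x : Fin (m + n)) : ℕ) := by
  simp only [Finset.mem_compl, Finset.mem_map, Finset.mem_univ, true_and, not_exists]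
  constructor
  · intro h
    by_contra hlt
    push_neg at hlt
    apply h ⟨((σ.1.symm x : Fin (m + n)) : ℕ), hlt⟩
    show σ.1 (Fin.castAdd n _) = x
    have he : (Fin.castAdd n ⟨((σ.1.symm x : Fin (m + n)) : ℕ), hlt⟩) = σ.1.symm x :=
      Fin.ext rfl
    rw [he, Equiv.apply_symm_apply]
  · intro h i hix
    have : σ.1.symm x = Fin.castAdd n i := by
      have : Bmap σ i = σ.1 (Fin.castAdd n i) := rfl
      rw [this] at hix
      rw [← hix, Equiv.symm_apply_apply]
    rw [this] at h
    simp at h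
    omega


def kfun (fcol : Fin (m + n) → ZMod r) : Fin (m + n) → ℕ ×ₗ Fin (m + n) :=
  fun x => toLex ((fcol x).val, x)

lemma kfun_inj (fcol : Fin (m + n) → ZMod r) : Function.Injective (kfun fcol) := by
  intro a b h
  have := congrArg (fun p => (ofLex p).2) h
  simpa [kfun] using this

lemma key_eq_kfun (σ : CP (m + n) r) (p : Fin (m + n)) :
    key σ p = kfun (fun x => σ.2 (σ.1.symm x)) (σ.1 p) := by
  simp [key, kfun, Equiv.symm_apply_apply]

lemma inj_aux [NeZero r] {σ σ' : CP (m + n) r}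
    (hσ : ∀ i : Fin (m + n), m ≤ (i : ℕ) → IsDescent σ i)
    (hσ' : ∀ i : Fin (m + n), m ≤ (i : ℕ) → IsDescent σ' i)
    (heq : Fmap σ = Fmap σ') : σ = σ' := by
  have h1 : Bmap σ = Bmap σ' := congrArg Prod.fst heq
  have h2 : (fun i => σ.2 (Fin.castAdd n i)) = (fun i => σ'.2 (Fin.castAdd n i)) :=
    congrArg (fun t => t.2.1) heq
  have h3 : (fun j => σ.2 (σ.1.symm (cEnum (Bmap σ) j)))
      = (fun j => σ'.2 (σ'.1.symm (cEnum (Bmap σ') j))) :=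
    congrArg (fun t => t.2.2) heq
  set fcol : Fin (m + n) → ZMod r := fun x => σ.2 (σ.1.symm x) with hfcoldef
  set fcol' : Fin (m + n) → ZMod r := fun x => σ'.2 (σ'.1.symm x) with hfcoldef'
  have hfcol : fcol = fcol' := by
    funext x
    by_cases hx : x ∈ Finset.univ.map (Bmap σ)
    · obtain ⟨i, -, hi⟩ := Finset.mem_map.mp hx
      have hi1 : σ.1 (Fin.castAdd n i) = x := hi
      have hi2 : σ'.1 (Fin.castAdd n i) = x := by
        have : Bmap σ' i = x := by rw [← h1]; exact hi
        exact this
      have l1 : fcol x = σ.2 (Fin.castAdd n i) := by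
        rw [hfcoldef]; simp only; rw [← hi1, Equiv.symm_apply_apply]
      have l2 : fcol' x = σ'.2 (Fin.castAdd n i) := by
        rw [hfcoldef']; simp only; rw [← hi2, Equiv.symm_apply_apply]
      rw [l1, l2]; exact congrFun h2 i
    · obtain ⟨j, hj⟩ := cEnum_surj (Bmap σ) x (Finset.mem_compl.mpr hx)
      show fcol x = fcol' x
      rw [← hj]
      have e1 : fcol (cEnum (Bmap σ) j) = σ'.2 (σ'.1.symm (cEnum (Bmap σ') j)) := by
        rw [hfcoldef]; simp only; exact congrFun h3 j
      rw [e1, hfcoldef']; simp only; rw [h1]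
  -- window enumerations
  have hbound : ∀ j : Fin n, m + (j : ℕ) < m + n := fun j => by omega
  set dfun : Fin n → ℕ ×ₗ Fin (m + n) := fun j => key σ ⟨m + (j : ℕ), hbound j⟩ with hdfun
  set dfun' : Fin n → ℕ ×ₗ Fin (m + n) := fun j => key σ' ⟨m + (j : ℕ), hbound j⟩ with hdfun'
  set s : Finset (ℕ ×ₗ Fin (m + n)) := ((Finset.univ.map (Bmap σ))ᶜ).image (kfun fcol) with hsdef
  have hscard : s.card = n := by
    rw [hsdef, Finset.card_image_of_injective _ (kfun_inj fcol), compl_card]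
  have hwin : ∀ j : Fin n, (⟨m + (j : ℕ), hbound j⟩ : Fin (m + n)) ∈ Finset.univ ∧ True := fun _ => ⟨Finset.mem_univ _, trivial⟩
  have hmemwin : ∀ (τ : CP (m + n) r) (j : Fin n),
      τ.1 ⟨m + (j : ℕ), hbound j⟩ ∈ ((Finset.univ.map (Bmap τ))ᶜ : Finset (Fin (m + n))) := by
    intro τ j
    rw [mem_compl_iff]
    rw [Equiv.symm_apply_apply]
    simp
  have hd : ∀ j, dfun j ∈ s := by
    intro j
    show key σ ⟨m + (j : ℕ), hbound j⟩ ∈ s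
    rw [key_eq_kfun σ]
    exact Finset.mem_image_of_mem (kfun fcol) (hmemwin σ j)
  have hd' : ∀ j, dfun' j ∈ s := by
    intro j
    show key σ' ⟨m + (j : ℕ), hbound j⟩ ∈ s
    rw [key_eq_kfun σ', ← hfcoldef', ← hfcol]
    exact Finset.mem_image_of_mem (kfun fcol) (by rw [h1]; exact hmemwin σ' j)
  have hanti : StrictAnti dfun := by
    intro a b hab
    exact key_chain hσ (p := ⟨m + (a : ℕ), hbound a⟩) (by simp) (m + (b : ℕ)) (hbound b)
      (by simp; omega)
  have hanti' : StrictAnti dfun' := by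
    intro a b hab
    exact key_chain hσ' (p := ⟨m + (a : ℕ), hbound a⟩) (by simp) (m + (b : ℕ)) (hbound b)
      (by simp; omega)
  have hdd : dfun = dfun' := strictAnti_unique hscard hd hd' hanti hanti'
  have hwineq : ∀ j : Fin n, σ.1 ⟨m + (j : ℕ), hbound j⟩ = σ'.1 ⟨m + (j : ℕ), hbound j⟩ := by
    intro j
    have e1 : key σ ⟨m + (j : ℕ), hbound j⟩ = key σ' ⟨m + (j : ℕ), hbound j⟩ :=
      congrFun hdd j
    rw [key_eq_kfun, key_eq_kfun, ← hfcoldef, ← hfcoldef', ← hfcol] at e1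
    exact kfun_inj fcol e1
  have hperm : σ.1 = σ'.1 := by
    apply Equiv.ext
    intro p
    by_cases hp : (p : ℕ) < m
    · have hpe : p = Fin.castAdd n ⟨(p : ℕ), hp⟩ := Fin.ext rfl
      rw [hpe]
      exact congrFun (congrArg (fun B : Fin m ↪ Fin (m + n) => (B : Fin m → Fin (m + n))) h1)
        ⟨(p : ℕ), hp⟩
    · have hj : (p : ℕ) - m < n := by omega
      have hpe : p = ⟨m + ((p : ℕ) - m), hbound ⟨(p : ℕ) - m, hj⟩⟩ := Fin.ext (by simp; omega)
      rw [hpe]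
      exact hwineq ⟨(p : ℕ) - m, hj⟩
  have hcol : σ.2 = σ'.2 := by
    funext p
    have e1 : σ.2 p = fcol (σ.1 p) := by rw [hfcoldef]; simp [Equiv.symm_apply_apply]
    have e2 : σ'.2 p = fcol' (σ'.1 p) := by rw [hfcoldef']; simp [Equiv.symm_apply_apply]
    rw [e1, e2, ← hfcol, ← hperm]
  exact Prod.ext hperm hcol


def wfun (B : Fin m ↪ Fin (m + n)) (π : Fin n → Fin n) : Fin (m + n) → Fin (m + n) :=
  fun p => if h : (p : ℕ) < m then B ⟨(p : ℕ), h⟩ else cEnum B (π ⟨(p : ℕ) - m, by omega⟩)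

def tfun (A : Fin m → ZMod r) (G : Fin n → ZMod r) (π : Fin n → Fin n) :
    Fin (m + n) → ZMod r :=
  fun p => if h : (p : ℕ) < m then A ⟨(p : ℕ), h⟩ else G (π ⟨(p : ℕ) - m, by omega⟩)

lemma wfun_inj (B : Fin m ↪ Fin (m + n)) (π : Fin n → Fin n)
    (hπinj : Function.Injective π) : Function.Injective (wfun B π) := by
  intro p q h
  unfold wfun at h
  split_ifs at h with h1 h2 h2
  · have := B.injective h
    have := congrArg Fin.val this
    simp at this
    exact Fin.ext (by omega)
  · exfalso
    have hm := cEnum_mem B (π ⟨(q : ℕ) - m, by omega⟩)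
    rw [← h] at hm
    exact (Finset.mem_compl.mp hm) (Finset.mem_map_of_mem B (Finset.mem_univ _))
  · exfalso
    have hm := cEnum_mem B (π ⟨(p : ℕ) - m, by omega⟩)
    rw [h] at hm
    exact (Finset.mem_compl.mp hm) (Finset.mem_map_of_mem B (Finset.mem_univ _))
  · have := hπinj (cEnum_inj B h)
    have := congrArg Fin.val this
    simp at this
    exact Fin.ext (by omega)

lemma surj_aux [NeZero r] (B : Fin m ↪ Fin (m + n)) (A : Fin m → ZMod r)
    (G : Fin n → ZMod r) (hG : ∀ j, G j ≠ 0) :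
    ∃ σ : CP (m + n) r, (∀ i : Fin (m + n), m ≤ (i : ℕ) → IsDescent σ i) ∧
      Fmap σ = (B, A, G) := by
  set K : Fin n → ℕ ×ₗ Fin (m + n) := fun j => toLex ((G j).val, cEnum B j) with hK
  have hKinj : Function.Injective K := by
    intro a b h
    have := congrArg (fun p => (ofLex p).2) h
    simp only [hK] at this
    exact cEnum_inj B this
  have hscard : (Finset.univ.image K).card = n := by
    rw [Finset.card_image_of_injective _ hKinj, Finset.card_univ, Fintype.card_fin]
  have hψ : ∀ j : Fin n, ∃ k, K k = (Finset.univ.image K).orderEmbOfFin hscard (Fin.rev j) := by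
    intro j
    obtain ⟨k, -, hk⟩ := Finset.mem_image.mp (Finset.orderEmbOfFin_mem _ hscard (Fin.rev j))
    exact ⟨k, hk⟩
  choose π hπ using hψ
  have hπinj : Function.Injective π := by
    intro a b h
    have ha := hπ a
    have hb := hπ b
    rw [h] at ha
    have := ((Finset.univ.image K).orderEmbOfFin hscard).injective (ha.symm.trans hb)
    exact Fin.rev_injective this
  have hπsurj : Function.Surjective π := Finite.injective_iff_surjective.mp hπinj
  have hKanti : ∀ a b : Fin n, a < b → K (π b) < K (π a) := by
    intro a b hab
    rw [hπ a, hπ b]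
    exact ((Finset.univ.image K).orderEmbOfFin hscard).strictMono (Fin.rev_lt_rev.mpr hab)
  have hwb := Finite.injective_iff_bijective.mp (wfun_inj B π hπinj)
  set σ : CP (m + n) r := (Equiv.ofBijective (wfun B π) hwb, tfun A G π) with hσdef
  have hbound : ∀ j : Fin n, m + (j : ℕ) < m + n := fun j => by omega
  have hw_lo : ∀ i : Fin m, σ.1 (Fin.castAdd n i) = B i := by
    intro i
    show wfun B π (Fin.castAdd n i) = B i
    unfold wfun
    rw [dif_pos (show ((Fin.castAdd n i : Fin (m + n)) : ℕ) < m by simpa using i.isLt)]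
    exact congrArg B (Fin.ext (by simp))
  have hw_hi : ∀ j : Fin n, σ.1 ⟨m + (j : ℕ), hbound j⟩ = cEnum B (π j) := by
    intro j
    show wfun B π _ = _
    unfold wfun
    rw [dif_neg (show ¬ ((⟨m + (j : ℕ), hbound j⟩ : Fin (m + n)) : ℕ) < m by simp)]
    congr 2
    exact Fin.ext (by simp)
  have ht_lo : ∀ i : Fin m, σ.2 (Fin.castAdd n i) = A i := by
    intro i
    show tfun A G π (Fin.castAdd n i) = A i
    unfold tfun
    rw [dif_pos (show ((Fin.castAdd n i : Fin (m + n)) : ℕ) < m by simpa using i.isLt)]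
    exact congrArg A (Fin.ext (by simp))
  have ht_hi : ∀ j : Fin n, σ.2 ⟨m + (j : ℕ), hbound j⟩ = G (π j) := by
    intro j
    show tfun A G π _ = _
    unfold tfun
    rw [dif_neg (show ¬ ((⟨m + (j : ℕ), hbound j⟩ : Fin (m + n)) : ℕ) < m by simp)]
    congr 2
    exact Fin.ext (by simp)
  have hkey : ∀ j : Fin n, key σ ⟨m + (j : ℕ), hbound j⟩ = K (π j) := by
    intro j
    show toLex ((σ.2 ⟨m + (j : ℕ), hbound j⟩).val, σ.1 ⟨m + (j : ℕ), hbound j⟩) = K (π j)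
    rw [ht_hi j, hw_hi j, hK]
  have hmem : ∀ i : Fin (m + n), m ≤ (i : ℕ) → IsDescent σ i := by
    intro i hi
    by_cases hlt : (i : ℕ) + 1 < m + n
    · rw [isDescent_iff_key σ i hlt]
      have hj1 : (i : ℕ) - m < n := by omega
      have hj2 : (i : ℕ) + 1 - m < n := by omega
      have e0 : i = ⟨m + ((i : ℕ) - m), hbound ⟨(i : ℕ) - m, hj1⟩⟩ := Fin.ext (by simp; omega)
      have e1 : (⟨(i : ℕ) + 1, hlt⟩ : Fin (m + n))
          = ⟨m + ((i : ℕ) + 1 - m), hbound ⟨(i : ℕ) + 1 - m, hj2⟩⟩ := Fin.ext (by simp; omega)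
      have k1 : key σ ⟨(i : ℕ) + 1, hlt⟩ = K (π ⟨(i : ℕ) + 1 - m, hj2⟩) := by
        rw [e1]; exact hkey ⟨(i : ℕ) + 1 - m, hj2⟩
      have k2 : key σ i = K (π ⟨(i : ℕ) - m, hj1⟩) := by
        have h2 := hkey ⟨(i : ℕ) - m, hj1⟩
        rw [← e0] at h2
        exact h2
      rw [k1, k2]
      exact hKanti _ _ (by rw [Fin.mk_lt_mk]; omega)
    · rw [isDescent_last_iff σ i hlt]
      have hj1 : (i : ℕ) - m < n := by omega
      have e0 : i = ⟨m + ((i : ℕ) - m), hbound ⟨(i : ℕ) - m, hj1⟩⟩ := Fin.ext (by simp; omega)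
      rw [e0, ht_hi ⟨(i : ℕ) - m, hj1⟩]
      exact hG _
  have hB : Bmap σ = B := Function.Embedding.ext hw_lo
  have hA : (fun i => σ.2 (Fin.castAdd n i)) = A := funext ht_lo
  have hGc : (fun j => σ.2 (σ.1.symm (cEnum (Bmap σ) j))) = G := by
    funext j
    obtain ⟨k, hk⟩ := hπsurj j
    have hc : cEnum (Bmap σ) j = cEnum B j := by rw [hB]
    have hsy : σ.1.symm (cEnum B j) = ⟨m + (k : ℕ), hbound k⟩ := by
      rw [Equiv.symm_apply_eq, hw_hi k, hk]
    rw [hc, hsy, ht_hi k, hk]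
  refine ⟨σ, hmem, ?_⟩
  show (Bmap σ, fun i => σ.2 (Fin.castAdd n i), fun j => σ.2 (σ.1.symm (cEnum (Bmap σ) j)))
      = (B, A, G)
  rw [hA, hGc, hB]


lemma Fmap_mem [NeZero r] {σ : CP (m + n) r}
    (hσ : ∀ i : Fin (m + n), m ≤ (i : ℕ) → IsDescent σ i) :
    ∀ j, (Fmap σ).2.2 j ≠ 0 := by
  intro j
  show σ.2 (σ.1.symm (cEnum (Bmap σ) j)) ≠ 0
  exact colors_ne_zero hσ ((mem_compl_iff σ _).mp (cEnum_mem _ j))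

lemma count_lemma (m n r : ℕ) [NeZero r] :
    (Finset.univ.filter
        (fun σ : CP (m + n) r => ∀ i : Fin (m + n), m ≤ (i : ℕ) → IsDescent σ i)).card
      = (m + n).descFactorial m * (r ^ m * (r - 1) ^ n) := by
  classical
  have hcard2 : (Finset.univ.filter
      (fun t : (Fin m ↪ Fin (m + n)) × (Fin m → ZMod r) × (Fin n → ZMod r) =>
        ∀ j, t.2.2 j ≠ 0)).card = (m + n).descFactorial m * (r ^ m * (r - 1) ^ n) := by
    have h1 : (Finset.univ.filter
        (fun t : (Fin m ↪ Fin (m + n)) × (Fin m → ZMod r) × (Fin n → ZMod r) =>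
          ∀ j, t.2.2 j ≠ 0))
        = Finset.univ ×ˢ (Finset.univ ×ˢ
            (Finset.univ.filter (fun g : Fin n → ZMod r => ∀ j, g j ≠ 0))) := by
      ext ⟨B, A, g⟩
      simp [Finset.mem_product]
    rw [h1, Finset.card_product, Finset.card_product]
    have h2 : (Finset.univ.filter (fun g : Fin n → ZMod r => ∀ j, g j ≠ 0))
        = Fintype.piFinset (fun _ : Fin n => Finset.univ.filter (fun c : ZMod r => c ≠ 0)) := by
      ext g
      simp [Fintype.mem_piFinset]
    have h3 : (Finset.univ.filter (fun c : ZMod r => c ≠ 0)).card = r - 1 := by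
      rw [Finset.filter_ne', Finset.card_erase_of_mem (Finset.mem_univ 0), Finset.card_univ,
        ZMod.card]
    rw [h2, Fintype.card_piFinset]
    simp only [h3, Finset.prod_const, Finset.card_univ, Fintype.card_fin]
    rw [Fintype.card_embedding_eq, Fintype.card_pi]
    simp only [ZMod.card, Fintype.card_fin, Finset.prod_const, Finset.card_univ]
  rw [← hcard2]
  apply Finset.card_nbij (i := Fmap)
  · intro σ hσ
    rw [Finset.mem_coe, Finset.mem_filter] at hσ ⊢
    exact ⟨Finset.mem_univ _, Fmap_mem hσ.2⟩
  · intro σ hσ σ' hσ' heq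
    rw [Finset.mem_coe, Finset.mem_filter] at hσ hσ'
    exact inj_aux hσ.2 hσ'.2 heq
  · intro t ht
    obtain ⟨B, A, G⟩ := t
    rw [Finset.mem_coe, Finset.mem_filter] at ht
    obtain ⟨σ, hmem, heq⟩ := surj_aux B A G ht.2
    refine ⟨σ, ?_, heq⟩
    rw [Finset.mem_coe, Finset.mem_filter]
    exact ⟨Finset.mem_univ _, hmem⟩

lemma count_lemma' (N m n r : ℕ) [NeZero r] (hN : m + n = N) :
    (Finset.univ.filter
        (fun σ : CP N r => ∀ i : Fin N, m ≤ (i : ℕ) → IsDescent σ i)).card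
      = N.descFactorial m * (r ^ m * (r - 1) ^ n) := by
  subst hN
  exact count_lemma m n r

lemma E_filter_eq (N r : ℕ) [NeZero r] (S : Finset (Fin N)) :
    E Finset.univ (fun σ : CP N r => ∏ i ∈ S, X i σ)
      = ((Finset.univ.filter (fun σ : CP N r => ∀ i ∈ S, IsDescent σ i)).card : ℚ)
        / ((Nat.factorial N * r ^ N : ℕ) : ℚ) := by
  unfold E
  have h1 : ∀ σ : CP N r,
      (∏ i ∈ S, X i σ) = if (∀ i ∈ S, IsDescent σ i) then (1 : ℚ) else 0 := by
    intro σ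
    by_cases hc : ∀ i ∈ S, IsDescent σ i
    · rw [if_pos hc]
      apply Finset.prod_eq_one
      intro i hi
      simp [X, if_pos (hc i hi)]
    · rw [if_neg hc]
      push_neg at hc
      obtain ⟨i, hi, hnd⟩ := hc
      apply Finset.prod_eq_zero hi
      simp [X, if_neg hnd]
  rw [Finset.sum_congr rfl (fun σ _ => h1 σ)]
  have h2 : (∑ σ ∈ (Finset.univ : Finset (CP N r)),
        if (∀ i ∈ S, IsDescent σ i) then (1 : ℚ) else 0)
      = ((Finset.univ.filter (fun σ : CP N r => ∀ i ∈ S, IsDescent σ i)).card : ℚ) := by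
    rw [Finset.sum_ite, Finset.sum_const_zero, add_zero, Finset.sum_const, nsmul_eq_mul, mul_one]
  rw [h2]
  congr 1
  rw [Finset.card_univ]
  show ((Fintype.card (CP N r) : ℕ) : ℚ) = _
  congr 1
  rw [Fintype.card_prod, Fintype.card_perm, Fintype.card_pi, Fintype.card_fin]
  simp [ZMod.card, Finset.prod_const, Finset.card_univ, Fintype.card_fin]

end CPAux

open CPAux in
open ColoredPerm in
theorem expectation_index_shift (n r m : ℕ) [NeZero r] (hn : 0 < n) (hm : 0 < m) :
    E Finset.univ (fun σ : CP n r => ∏ i, X i σ) =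
      E Finset.univ (fun σ : CP (m + n) r =>
        ∏ i ∈ Finset.univ.filter (fun i : Fin (m + n) => m ≤ (i : ℕ)), X i σ) ∧
    E Finset.univ (fun σ : CP n r => ∏ i, X i σ) =
      (((r : ℚ) - 1) / r) ^ n / Nat.factorial n := by
  classical
  have hr1 : (1 : ℕ) ≤ r := Nat.one_le_iff_ne_zero.mpr (NeZero.ne r)
  have hrQ : (r : ℚ) ≠ 0 := Nat.cast_ne_zero.mpr (NeZero.ne r)
  -- LHS value
  have hL : E Finset.univ (fun σ : CP n r => ∏ i, X i σ)
      = (((r - 1) ^ n : ℕ) : ℚ) / ((Nat.factorial n * r ^ n : ℕ) : ℚ) := by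
    rw [E_filter_eq n r Finset.univ]
    congr 2
    have hfe : (Finset.univ.filter (fun σ : CP n r => ∀ i ∈ Finset.univ, IsDescent σ i))
        = Finset.univ.filter (fun σ : CP n r => ∀ i : Fin n, 0 ≤ (i : ℕ) → IsDescent σ i) := by
      ext σ
      simp
    rw [hfe, count_lemma' n 0 n r (Nat.zero_add n)]
    simp
  have hR : E Finset.univ (fun σ : CP (m + n) r =>
        ∏ i ∈ Finset.univ.filter (fun i : Fin (m + n) => m ≤ (i : ℕ)), X i σ)
      = (((m + n).descFactorial m * (r ^ m * (r - 1) ^ n) : ℕ) : ℚ)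
        / ((Nat.factorial (m + n) * r ^ (m + n) : ℕ) : ℚ) := by
    rw [E_filter_eq (m + n) r]
    congr 2
    have hfe : (Finset.univ.filter (fun σ : CP (m + n) r =>
        ∀ i ∈ Finset.univ.filter (fun i : Fin (m + n) => m ≤ (i : ℕ)), IsDescent σ i))
        = Finset.univ.filter
            (fun σ : CP (m + n) r => ∀ i : Fin (m + n), m ≤ (i : ℕ) → IsDescent σ i) := by
      ext σ
      simp
    rw [hfe, count_lemma' (m + n) m n r rfl]
  have hfac : Nat.factorial n * (m + n).descFactorial m = Nat.factorial (m + n) := by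
    have h := Nat.factorial_mul_descFactorial (Nat.le_add_right m n)
    rwa [Nat.add_sub_cancel_left] at h
  constructor
  · rw [hL, hR]
    have hfacQ : ((Nat.factorial (m + n) : ℕ) : ℚ)
        = ((Nat.factorial n : ℕ) : ℚ) * (((m + n).descFactorial m : ℕ) : ℚ) := by
      exact_mod_cast hfac.symm
    push_cast
    rw [div_eq_div_iff (by positivity) ?h2]
    · push_cast at hfacQ
      rw [hfacQ, pow_add]
      ring
    · positivity
  · rw [hL]
    have hc : (((r - 1) : ℕ) : ℚ) = (r : ℚ) - 1 := by
      push_cast [hr1]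
      ring
    push_cast
    rw [hc, div_pow]
    rw [div_div]
    congr 1
    ring
end

section
/- Let a₁,…,a_k ∈ [n-1] with induced blocks 𝓑₁,…,𝓑_t, and let J = 𝔖_{𝓑₁} × ⋯ × 𝔖_{𝓑_t} ≤ 𝔖_n act on 𝔖_{n,r} by π · (ω,τ) = (π,𝟎)(ω,τ)(π,𝟎)^{-1}. If C is a conjugacy class of 𝔖_{n,r} with no cycles of lengths 1,2,…,2k, then every J-orbit in C has size |J| = ∏_i |𝓑_i|!, and each orbit contains exactly one element with descents at all of a₁,…,a_k. -/
open scoped Classical BigOperators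

namespace ColoredPerm

variable {n r k : ℕ} (a : Fin k → Fin n)

lemma perm_apply_inv_self {α : Type*} (f : Equiv.Perm α) (x : α) : f (f⁻¹ x) = x :=
  f.apply_symm_apply x

lemma perm_inv_apply_self {α : Type*} (f : Equiv.Perm α) (x : α) : f⁻¹ (f x) = x :=
  f.symm_apply_apply x

lemma sb_refl (p : Fin n) : SameBlock a p p := Relation.EqvGen.refl p

lemma sb_symm {p q : Fin n} (h : SameBlock a p q) : SameBlock a q p :=
  Relation.EqvGen.symm _ _ h

lemma sb_trans {p q s : Fin n} (h : SameBlock a p q) (h' : SameBlock a q s) :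
    SameBlock a p s := Relation.EqvGen.trans _ _ _ h h'

lemma sb_covers {p q : Fin n} (h : SameBlock a p q) :
    ∀ c : ℕ, min p.val q.val ≤ c → c < max p.val q.val → ∃ i, ((a i : Fin n) : ℕ) = c := by
  induction h with
  | rel p q hr =>
      rintro c h1 h2
      obtain ⟨⟨i, rfl⟩, hq⟩ := hr
      exact ⟨i, by omega⟩
  | refl p => intro c h1 h2; omega
  | symm p q h ih => intro c h1 h2; exact ih c (by omega) (by omega)
  | trans p q s h1 h2 ih1 ih2 =>
      intro c hc1 hc2
      rcases (by omega :
          (min p.val q.val ≤ c ∧ c < max p.val q.val) ∨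
          (min q.val s.val ≤ c ∧ c < max q.val s.val)) with ⟨u, v⟩ | ⟨u, v⟩
      · exact ih1 c u v
      · exact ih2 c u v

lemma sb_adj {c : Fin n} (hc : ∃ i, a i = c) {z : Fin n} (hz : z.val = c.val + 1) :
    SameBlock a c z := Relation.EqvGen.rel _ _ ⟨hc, hz⟩

lemma sb_interval {p q z : Fin n} (h : SameBlock a p q)
    (h1 : min p.val q.val ≤ z.val) (h2 : z.val ≤ max p.val q.val) : SameBlock a p z := by
  have key : ∀ t : ℕ, ∀ z : Fin n, z.val = min p.val q.val + t →
      z.val ≤ max p.val q.val → SameBlock a p z := by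
    intro t
    induction t with
    | zero =>
        intro z hz _
        rcases le_total p.val q.val with hle | hle
        · have : z = p := Fin.ext (by omega)
          exact this ▸ sb_refl a p
        · have : z = q := Fin.ext (by omega)
          exact this ▸ h
    | succ t ih =>
        intro z hz hz2
        have hlt : min p.val q.val + t < n := by omega
        have h1 : SameBlock a p ⟨min p.val q.val + t, hlt⟩ :=
          ih _ rfl (show min p.val q.val + t ≤ max p.val q.val by omega)
        obtain ⟨i, hi⟩ := sb_covers a h (min p.val q.val + t) (by omega) (by omega)
        have hai : a i = ⟨min p.val q.val + t, hlt⟩ := Fin.ext hi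
        have hstep : SameBlock a (a i) z := sb_adj a ⟨i, rfl⟩ (by rw [hi]; omega)
        exact sb_trans a h1 (hai ▸ hstep)
  exact key (z.val - min p.val q.val) z (by omega) h2

lemma sb_cut {p q : Fin n} (h : SameBlock a p q) (hadj : q.val = p.val + 1) :
    ∃ i, a i = p := by
  obtain ⟨i, hi⟩ := sb_covers a h p.val (by omega) (by omega)
  exact ⟨i, Fin.ext hi⟩

/-- The set of positions touched by some `aᵢ` edge. -/
noncomputable def Bset : Finset (Fin n) :=
  Finset.univ.filter (fun p => (∃ i, a i = p) ∨ (∃ i, ((a i : Fin n) : ℕ) + 1 = p.val))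

lemma sb_mem_B {p q : Fin n} (h : SameBlock a p q) :
    p = q ∨ (p ∈ Bset a ∧ q ∈ Bset a) := by
  induction h with
  | rel p q hr =>
      obtain ⟨⟨i, hi⟩, hq⟩ := hr
      refine Or.inr ⟨?_, ?_⟩ <;> simp only [Bset, Finset.mem_filter, Finset.mem_univ, true_and]
      · exact Or.inl ⟨i, hi⟩
      · exact Or.inr ⟨i, by rw [hi]; omega⟩
  | refl p => exact Or.inl rfl
  | symm p q h ih => tauto
  | trans p q s h1 h2 ih1 ih2 =>
      rcases ih1 with rfl | ⟨hp, hq⟩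
      · exact ih2
      · rcases ih2 with rfl | ⟨hq', hs⟩
        · exact Or.inr ⟨hp, hq⟩
        · exact Or.inr ⟨hp, hs⟩

lemma Bset_card (ha : ∀ i, ((a i : Fin n) : ℕ) + 1 < n) : (Bset a).card ≤ 2 * k := by
  have hsub : Bset a ⊆
      (Finset.univ.image a) ∪ (Finset.univ.image (fun i => (⟨(a i : ℕ) + 1, ha i⟩ : Fin n))) := by
    intro p hp
    simp only [Bset, Finset.mem_filter, Finset.mem_univ, true_and] at hp
    rcases hp with ⟨i, hi⟩ | ⟨i, hi⟩
    · exact Finset.mem_union_left _ (Finset.mem_image.mpr ⟨i, Finset.mem_univ i, hi⟩)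
    · exact Finset.mem_union_right _
        (Finset.mem_image.mpr ⟨i, Finset.mem_univ i, Fin.ext hi⟩)
  calc (Bset a).card ≤ _ := Finset.card_le_card hsub
    _ ≤ (Finset.univ.image a).card +
        (Finset.univ.image (fun i => (⟨(a i : ℕ) + 1, ha i⟩ : Fin n))).card :=
      Finset.card_union_le _ _
    _ ≤ k + k := by
        gcongr <;> exact (Finset.card_image_le).trans (by simp)
    _ = 2 * k := by ring
lemma mem_blockOf {z x : Fin n} : x ∈ blockOf a z ↔ SameBlock a z x := by
  simp [blockOf]

lemma self_mem_blockOf (z : Fin n) : z ∈ blockOf a z :=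
  (mem_blockOf a).mpr (sb_refl a z)

lemma blockOf_eq {z z' : Fin n} (h : SameBlock a z z') : blockOf a z = blockOf a z' := by
  ext x
  simp only [mem_blockOf]
  exact ⟨fun h' => sb_trans a (sb_symm a h) h', fun h' => sb_trans a h h'⟩

lemma block_eq_blockOf {b : Finset (Fin n)} (hb : b ∈ blocks a) {x : Fin n} (hx : x ∈ b) :
    b = blockOf a x := by
  obtain ⟨z, _, rfl⟩ := Finset.mem_image.mp hb
  exact blockOf_eq a ((mem_blockOf a).mp hx)

lemma mem_block_iff {b : Finset (Fin n)} (hb : b ∈ blocks a) {x y : Fin n}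
    (h : SameBlock a x y) : x ∈ b ↔ y ∈ b := by
  obtain ⟨z, _, rfl⟩ := Finset.mem_image.mp hb
  simp only [mem_blockOf]
  exact ⟨fun h' => sb_trans a h' h, fun h' => sb_trans a h' (sb_symm a h)⟩

lemma J_lt_of_not_sb {π : Equiv.Perm (Fin n)} (hπ : ∀ p, SameBlock a p (π p))
    {z z' : Fin n} (hnb : ¬ SameBlock a z z') (hlt : z < z') : π z < π z' := by
  by_contra hcon
  have hne : π z ≠ π z' := fun h => hnb (π.injective h ▸ sb_refl a z)
  have hlt' : (π z').val < (π z).val := by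
    rcases lt_or_ge (π z') (π z) with h | h
    · exact h
    · exact absurd (lt_of_le_of_ne h hne) hcon
  have hzz : z.val < z'.val := hlt
  have hcn : min (max z.val (π z).val) (max z'.val (π z').val) < n :=
    lt_of_le_of_lt (min_le_left _ _) (by
      rcases max_cases z.val (π z).val with ⟨h, _⟩ | ⟨h, _⟩ <;> rw [h] <;> exact Fin.is_lt _)
  set cv := min (max z.val (π z).val) (max z'.val (π z').val) with hcv
  have h1 : SameBlock a z ⟨cv, hcn⟩ :=
    sb_interval a (hπ z) (show min z.val (π z).val ≤ cv by omega)
      (show cv ≤ max z.val (π z).val by omega)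
  have h2 : SameBlock a z' ⟨cv, hcn⟩ :=
    sb_interval a (hπ z') (show min z'.val (π z').val ≤ cv by omega)
      (show cv ≤ max z'.val (π z').val by omega)
  exact hnb (sb_trans a h1 (sb_symm a h2))

lemma J_lt_iff {π : Equiv.Perm (Fin n)} (hπ : ∀ p, SameBlock a p (π p))
    {z z' : Fin n} (hnb : ¬ SameBlock a z z') : π z < π z' ↔ z < z' := by
  constructor
  · intro h
    rcases lt_trichotomy z z' with h' | rfl | h'
    · exact h'
    · exact absurd h (lt_irrefl _)
    · exact absurd (J_lt_of_not_sb a hπ (fun hh => hnb (sb_symm a hh)) h')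
        (fun hh => absurd (hh.trans h) (lt_irrefl _))
  · exact J_lt_of_not_sb a hπ hnb

lemma J_increasing_eq_id {g : Equiv.Perm (Fin n)} (hg : ∀ p, SameBlock a p (g p))
    (hmono : ∀ z z' : Fin n, SameBlock a z z' → z < z' → g z < g z') : g = 1 := by
  have key : ∀ m : ℕ, ∀ z : Fin n, z.val = m → g z = z := by
    intro m
    induction m using Nat.strong_induction_on with
    | _ m ih =>
      intro z hz
      rcases lt_trichotomy (g z) z with hlt | heq | hlt
      · have h1 : g (g z) = g z := ih (g z).val (hz ▸ hlt) (g z) rfl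
        exact absurd (g.injective h1) (ne_of_lt hlt)
      · exact heq
      · exfalso
        set u := g⁻¹ z with hu
        have hgu : g u = z := g.apply_symm_apply z
        have hsb : SameBlock a z u := sb_symm a (hgu ▸ hg u)
        have hne : u ≠ z := fun h => absurd (h ▸ hgu) (ne_of_gt hlt)
        rcases lt_or_gt_of_ne hne with h' | h'
        · have := ih u.val (hz ▸ h') u rfl
          rw [this] at hgu
          exact hne hgu
        · have := hmono z u hsb h'
          rw [hgu] at this
          exact absurd (this.trans hlt) (lt_irrefl _)
  exact Equiv.ext fun z => key z.val z rfl
lemma card_J :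
    (Finset.univ.filter (fun π : Equiv.Perm (Fin n) => ∀ p, SameBlock a p (π p))).card =
      ∏ b ∈ blocks a, Nat.factorial b.card := by
  classical
  rw [← Fintype.card_subtype]
  have hF : Fintype.card {π : Equiv.Perm (Fin n) // ∀ p, SameBlock a p (π p)} =
      Fintype.card (∀ b : (blocks a : Finset (Finset (Fin n))),
        Equiv.Perm {x : Fin n // x ∈ (b : Finset (Fin n))}) := by
    apply Fintype.card_of_bijective
      (f := fun (π : {π : Equiv.Perm (Fin n) // ∀ p, SameBlock a p (π p)})
          (b : {s // s ∈ blocks a}) =>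
        π.1.subtypePerm (fun x => (mem_block_iff a b.2 (π.2 x)).symm))
    constructor
    · intro π π' h
      apply Subtype.ext; apply Equiv.ext; intro z
      have hb : blockOf a z ∈ blocks a := Finset.mem_image_of_mem _ (Finset.mem_univ z)
      have h2 := congrFun h ⟨blockOf a z, hb⟩
      have h3 := congrArg (fun e => (e ⟨z, self_mem_blockOf a z⟩ : {x // x ∈ blockOf a z}).1)
        h2
      simpa using h3
    · intro F0
      have hcong : ∀ (b b' : {s // s ∈ blocks a}) (_ : b = b')
          (u : {x : Fin n // x ∈ b.1}) (u' : {x : Fin n // x ∈ b'.1}),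
          (u : Fin n) = (u' : Fin n) →
          ((F0 b u : {x // x ∈ b.1}) : Fin n) = ((F0 b' u' : {x // x ∈ b'.1}) : Fin n) := by
        rintro b b' rfl u u' h
        exact congrArg Subtype.val (congrArg (F0 b) (Subtype.ext h))
      have hinj0 : ∀ (b b' : {s // s ∈ blocks a}) (_ : b = b')
          (u : {x : Fin n // x ∈ b.1}) (u' : {x : Fin n // x ∈ b'.1}),
          ((F0 b u : {x // x ∈ b.1}) : Fin n) = ((F0 b' u' : {x // x ∈ b'.1}) : Fin n) →
          (u : Fin n) = (u' : Fin n) := by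
        rintro b b' rfl u u' h
        exact congrArg Subtype.val ((F0 b).injective (Subtype.ext h))
      set g : Fin n → Fin n := fun z =>
        ((F0 ⟨blockOf a z, Finset.mem_image_of_mem _ (Finset.mem_univ z)⟩)
          ⟨z, self_mem_blockOf a z⟩ : {x // x ∈ blockOf a z}).1 with hg
      have hgmem : ∀ z, g z ∈ blockOf a z := fun z =>
        ((F0 ⟨blockOf a z, _⟩) ⟨z, self_mem_blockOf a z⟩).2
      have hgsb : ∀ z, SameBlock a z (g z) := fun z => (mem_blockOf a).mp (hgmem z)
      have hginj : Function.Injective g := by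
        intro z z' hzz
        have hsb : SameBlock a z z' :=
          sb_trans a (hgsb z) (hzz ▸ sb_symm a (hgsb z'))
        have hbo : blockOf a z = blockOf a z' := blockOf_eq a hsb
        exact hinj0 _ _ (Subtype.ext hbo) ⟨z, self_mem_blockOf a z⟩
          ⟨z', self_mem_blockOf a z'⟩ hzz
      have hbij : Function.Bijective g := Finite.injective_iff_bijective.mp hginj
      refine ⟨⟨Equiv.ofBijective g hbij, fun p => hgsb p⟩, ?_⟩
      funext b
      apply Equiv.ext; intro u
      apply Subtype.ext
      have hbu : b = ⟨blockOf a (u : Fin n),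
          Finset.mem_image_of_mem _ (Finset.mem_univ _)⟩ :=
        Subtype.ext (block_eq_blockOf a b.2 u.2)
      exact ((hcong b _ hbu u ⟨u, self_mem_blockOf a _⟩ rfl)).symm
  rw [hF, Fintype.card_pi]
  rw [← Finset.prod_coe_sort (blocks a) (fun b => Nat.factorial b.card)]
  congr 1
  funext b
  rw [Fintype.card_perm, Fintype.card_coe]
def conjP {n r : ℕ} (π : Equiv.Perm (Fin n)) (x : CP n r) : CP n r :=
  (π * x.1 * π⁻¹, fun i => x.2 (π⁻¹ i))

lemma conj_eq (π : Equiv.Perm (Fin n)) (x : CP n r) :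
    cmul (cmul ((π, fun _ => 0) : CP n r) x) (cinv (π, fun _ => 0)) = conjP π x := by
  unfold cmul cinv conjP
  refine Prod.ext ?_ ?_
  · rfl
  · funext i; simp

lemma cycle_big {x : CP n r} (hx : ∀ ℓ, 1 ≤ ℓ → ℓ ≤ 2 * k → NoCycleOfLength x ℓ)
    (q : Fin n) : 2 * k < (cycleSet x q).card := by
  have h1 : q ∈ cycleSet x q := by
    simp [cycleSet, Equiv.Perm.SameCycle.refl]
  by_contra hcon
  push_neg at hcon
  exact hx (cycleSet x q).card (Finset.card_pos.mpr ⟨q, h1⟩) hcon q rfl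

lemma exists_notin_B {x : CP n r} (ha : ∀ i, ((a i : Fin n) : ℕ) + 1 < n)
    (hcyc : ∀ q, 2 * k < (cycleSet x q).card) (p : Fin n) :
    ∃ z ∈ cycleSet x p, z ∉ Bset a := by
  rw [← Finset.not_subset]
  intro hsub
  exact absurd ((hcyc p).trans_le (Finset.card_le_card hsub)) (by
    have := Bset_card a ha; omega)

lemma conj_injOn {x : CP n r} (ha : ∀ i, ((a i : Fin n) : ℕ) + 1 < n)
    (hcyc : ∀ q, 2 * k < (cycleSet x q).card)
    {π π' : Equiv.Perm (Fin n)} (hπ : ∀ p, SameBlock a p (π p))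
    (hπ' : ∀ p, SameBlock a p (π' p))
    (h : π * x.1 * π⁻¹ = π' * x.1 * π'⁻¹) : π = π' := by
  set δ : Equiv.Perm (Fin n) := π'⁻¹ * π with hδdef
  have hcomm : δ * x.1 = x.1 * δ := by
    have h2 := congrArg (fun z => π'⁻¹ * z * π) h
    simpa [hδdef, mul_assoc] using h2
  have hδ : ∀ p, SameBlock a p (δ p) := by
    intro p
    have h1 : SameBlock a p (π p) := hπ p
    have h2 : SameBlock a (π'⁻¹ (π p)) (π' (π'⁻¹ (π p))) := hπ' _
    rw [perm_apply_inv_self] at h2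
    exact sb_trans a h1 (sb_symm a h2)
  have hδ1 : δ = 1 := by
    apply Equiv.ext
    intro p
    obtain ⟨z, hz1, hz2⟩ := exists_notin_B a ha hcyc p
    have hδz : δ z = z := by
      rcases sb_mem_B a (hδ z) with h' | ⟨h', _⟩
      · exact h'.symm
      · exact absurd h' hz2
    have hsc : x.1.SameCycle z p := by
      have : x.1.SameCycle p z := by simpa [cycleSet] using hz1
      exact this.symm
    obtain ⟨m, _, hm⟩ := hsc.exists_pow_eq'
    have hcm : δ * x.1 ^ m = x.1 ^ m * δ := (Commute.pow_right hcomm m)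
    have := congrArg (fun f => f z) hcm
    simp only [Equiv.Perm.mul_apply] at this
    rw [hδz, hm] at this
    simpa using this.symm ▸ rfl
  have : π'⁻¹ * π = 1 := hδ1
  have := congrArg (fun z => π' * z) this
  simpa [← mul_assoc] using this
lemma pow_succ_apply (f : Equiv.Perm (Fin n)) (j : ℕ) (z : Fin n) :
    (f ^ (j + 1)) z = (f ^ j) (f z) := by
  rw [pow_succ, Equiv.Perm.mul_apply]

noncomputable def exitSet (x : CP n r) (q q' : Fin n) : Set ℕ :=
  {j | x.2 ((x.1 ^ j) q) ≠ x.2 ((x.1 ^ j) q') ∨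
       ¬ SameBlock a ((x.1 ^ (j + 1)) q) ((x.1 ^ (j + 1)) q')}

noncomputable def exitIdx (x : CP n r) (q q' : Fin n) : ℕ := sInf (exitSet a x q q')

noncomputable def GtR (x : CP n r) (q q' : Fin n) : Prop :=
  if exitIdx a x q q' % 2 = 0 then
    (if x.2 ((x.1 ^ exitIdx a x q q') q) = x.2 ((x.1 ^ exitIdx a x q q') q')
     then (x.1 ^ (exitIdx a x q q' + 1)) q' < (x.1 ^ (exitIdx a x q q' + 1)) q
     else (x.2 ((x.1 ^ exitIdx a x q q') q')).val < (x.2 ((x.1 ^ exitIdx a x q q') q)).val)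
  else
    (if x.2 ((x.1 ^ exitIdx a x q q') q) = x.2 ((x.1 ^ exitIdx a x q q') q')
     then (x.1 ^ (exitIdx a x q q' + 1)) q < (x.1 ^ (exitIdx a x q q' + 1)) q'
     else (x.2 ((x.1 ^ exitIdx a x q q') q)).val < (x.2 ((x.1 ^ exitIdx a x q q') q')).val)

lemma exitSet_symm (x : CP n r) (q q' : Fin n) : exitSet a x q q' = exitSet a x q' q := by
  ext j
  simp only [exitSet, Set.mem_setOf_eq]
  constructor <;> rintro (h | h)
  · exact Or.inl h.symm
  · exact Or.inr fun hh => h (sb_symm a hh)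
  · exact Or.inl h.symm
  · exact Or.inr fun hh => h (sb_symm a hh)

lemma exitIdx_symm (x : CP n r) (q q' : Fin n) : exitIdx a x q q' = exitIdx a x q' q := by
  rw [exitIdx, exitIdx, exitSet_symm]

lemma exit_nonempty {x : CP n r} (hcyc : ∀ q, 2 * k < (cycleSet x q).card)
    (ha : ∀ i, ((a i : Fin n) : ℕ) + 1 < n)
    {q q' : Fin n} (hne : q ≠ q') (hsb : SameBlock a q q') :
    (exitSet a x q q').Nonempty := by
  by_contra hcon
  rw [Set.not_nonempty_iff_eq_empty] at hcon
  have hall : ∀ j, x.2 ((x.1 ^ j) q) = x.2 ((x.1 ^ j) q') ∧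
      SameBlock a ((x.1 ^ (j + 1)) q) ((x.1 ^ (j + 1)) q') := by
    intro j
    have h1 : j ∉ exitSet a x q q' := by rw [hcon]; exact Set.notMem_empty j
    simp only [exitSet, Set.mem_setOf_eq, not_or, not_not] at h1
    exact h1
  have hsbj : ∀ j, SameBlock a ((x.1 ^ j) q) ((x.1 ^ j) q') := by
    intro j
    cases j with
    | zero => simpa using hsb
    | succ j => exact (hall j).2
  have hmemB : ∀ j, (x.1 ^ j) q ∈ Bset a := by
    intro j
    have hnej : (x.1 ^ j) q ≠ (x.1 ^ j) q' := fun h => hne ((x.1 ^ j).injective h)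
    rcases sb_mem_B a (hsbj j) with h | ⟨h, _⟩
    · exact absurd h hnej
    · exact h
  have hsub : cycleSet x q ⊆ Bset a := by
    intro z hz
    have hsc : x.1.SameCycle q z := by simpa [cycleSet] using hz
    obtain ⟨m, _, hm⟩ := hsc.exists_pow_eq'
    exact hm ▸ hmemB m
  exact absurd ((hcyc q).trans_le (Finset.card_le_card hsub))
    (by have := Bset_card a ha; omega)

lemma exitIdx_eq_zero_col {x : CP n r} {q q' : Fin n} (h : x.2 q ≠ x.2 q') :
    exitIdx a x q q' = 0 := by
  rw [exitIdx, Nat.sInf_eq_zero]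
  exact Or.inl (Or.inl (by simpa using h))

lemma GtR_col {x : CP n r} {q q' : Fin n} (h : x.2 q ≠ x.2 q') :
    GtR a x q q' ↔ (x.2 q').val < (x.2 q).val := by
  rw [GtR, exitIdx_eq_zero_col a h]
  simp [h]

lemma exitIdx_eq_zero_blk {x : CP n r} {q q' : Fin n}
    (h : ¬ SameBlock a (x.1 q) (x.1 q')) : exitIdx a x q q' = 0 := by
  rw [exitIdx, Nat.sInf_eq_zero]
  refine Or.inl (Or.inr ?_)
  simpa [pow_succ_apply] using h

lemma GtR_val {x : CP n r} {q q' : Fin n} (hc : x.2 q = x.2 q')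
    (h : ¬ SameBlock a (x.1 q) (x.1 q')) :
    GtR a x q q' ↔ x.1 q' < x.1 q := by
  rw [GtR, exitIdx_eq_zero_blk a h]
  simp [hc, pow_one]

lemma GtR_irrefl (x : CP n r) (q : Fin n) : ¬ GtR a x q q := by
  rw [GtR]
  split
  · rw [if_pos rfl]; exact lt_irrefl _
  · rw [if_pos rfl]; exact lt_irrefl _
lemma exitIdx_shift {x : CP n r} (hcyc : ∀ q, 2 * k < (cycleSet x q).card)
    (ha : ∀ i, ((a i : Fin n) : ℕ) + 1 < n) {q q' : Fin n}
    (hne : q ≠ q') (hc : x.2 q = x.2 q') (hsb1 : SameBlock a (x.1 q) (x.1 q')) :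
    exitIdx a x q q' = exitIdx a x (x.1 q) (x.1 q') + 1 := by
  have hstep : ∀ j, (j + 1 ∈ exitSet a x q q') ↔ j ∈ exitSet a x (x.1 q) (x.1 q') := by
    intro j
    simp only [exitSet, Set.mem_setOf_eq, pow_succ_apply]
  have h0 : 0 ∉ exitSet a x q q' := by
    simp only [exitSet, Set.mem_setOf_eq, pow_zero, Equiv.Perm.one_apply, zero_add, pow_one,
      not_or, not_not]
    exact ⟨hc, hsb1⟩
  have hne' : x.1 q ≠ x.1 q' := fun h => hne (x.1.injective h)
  have hS'ne : (exitSet a x (x.1 q) (x.1 q')).Nonempty := exit_nonempty a hcyc ha hne' hsb1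
  have hm' : sInf (exitSet a x (x.1 q) (x.1 q')) ∈ exitSet a x (x.1 q) (x.1 q') :=
    Nat.sInf_mem hS'ne
  have hmem : sInf (exitSet a x (x.1 q) (x.1 q')) + 1 ∈ exitSet a x q q' := (hstep _).mpr hm'
  have hle : sInf (exitSet a x q q') ≤ sInf (exitSet a x (x.1 q) (x.1 q')) + 1 :=
    Nat.sInf_le hmem
  have hSmem : sInf (exitSet a x q q') ∈ exitSet a x q q' := Nat.sInf_mem ⟨_, hmem⟩
  have hnz : sInf (exitSet a x q q') ≠ 0 := fun h => h0 (h ▸ hSmem)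
  have heq : sInf (exitSet a x q q') - 1 + 1 = sInf (exitSet a x q q') := by omega
  have hmem2 : sInf (exitSet a x q q') - 1 ∈ exitSet a x (x.1 q) (x.1 q') :=
    (hstep _).mp (by rw [heq]; exact hSmem)
  have := Nat.sInf_le hmem2
  show sInf (exitSet a x q q') = sInf (exitSet a x (x.1 q) (x.1 q')) + 1
  omega

lemma GtR_shift {x : CP n r} (hcyc : ∀ q, 2 * k < (cycleSet x q).card)
    (ha : ∀ i, ((a i : Fin n) : ℕ) + 1 < n) {q q' : Fin n}
    (hne : q ≠ q') (hc : x.2 q = x.2 q') (hsb1 : SameBlock a (x.1 q) (x.1 q')) :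
    GtR a x q q' ↔ GtR a x (x.1 q') (x.1 q) := by
  have he := exitIdx_shift a hcyc ha hne hc hsb1
  have he2 : exitIdx a x (x.1 q') (x.1 q) = exitIdx a x (x.1 q) (x.1 q') :=
    exitIdx_symm a x _ _
  rw [GtR, GtR, he, he2]
  set e := exitIdx a x (x.1 q) (x.1 q') with hee
  rcases Nat.even_or_odd e with he' | he'
  · have hp0 : e % 2 = 0 := Nat.even_iff.mp he'
    have hp1 : ¬((e + 1) % 2 = 0) := by omega
    rw [if_neg hp1, if_pos hp0]
    by_cases hcc : x.2 ((x.1 ^ e) (x.1 q)) = x.2 ((x.1 ^ e) (x.1 q'))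
    · rw [if_pos (by simpa only [pow_succ_apply] using hcc), if_pos hcc.symm]
      simp only [pow_succ_apply]
    · rw [if_neg (by simpa only [pow_succ_apply] using hcc),
        if_neg (fun h => hcc h.symm)]
      simp only [pow_succ_apply]
  · have hp0 : ¬(e % 2 = 0) := by
      have := Nat.odd_iff.mp he'; omega
    have hp1 : (e + 1) % 2 = 0 := by
      have := Nat.odd_iff.mp he'; omega
    rw [if_pos hp1, if_neg hp0]
    by_cases hcc : x.2 ((x.1 ^ e) (x.1 q)) = x.2 ((x.1 ^ e) (x.1 q'))
    · rw [if_pos (by simpa only [pow_succ_apply] using hcc), if_pos hcc.symm]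
      simp only [pow_succ_apply]
    · rw [if_neg (by simpa only [pow_succ_apply] using hcc),
        if_neg (fun h => hcc h.symm)]
      simp only [pow_succ_apply]

lemma GtR_total [NeZero r] {x : CP n r} {q q' : Fin n} (hne : q ≠ q') :
    GtR a x q q' ↔ ¬ GtR a x q' q := by
  have hs : exitIdx a x q' q = exitIdx a x q q' := exitIdx_symm a x _ _
  rw [GtR, GtR, hs]
  set e := exitIdx a x q q' with hee
  have hlt_iff : ∀ u v : Fin n, u ≠ v → (u < v ↔ ¬(v < u)) := by
    intro u v huv
    constructor
    · intro h h'
      exact absurd (h.trans h') (lt_irrefl _)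
    · intro h
      exact (lt_or_gt_of_ne huv).resolve_right h
  by_cases hcc : x.2 ((x.1 ^ e) q) = x.2 ((x.1 ^ e) q')
  · have hnev : (x.1 ^ (e + 1)) q ≠ (x.1 ^ (e + 1)) q' :=
      fun h => hne ((x.1 ^ (e + 1)).injective h)
    by_cases hp : e % 2 = 0
    · rw [if_pos hp, if_pos hp, if_pos hcc, if_pos hcc.symm]
      exact hlt_iff _ _ (fun h => hnev h.symm)
    · rw [if_neg hp, if_neg hp, if_pos hcc, if_pos hcc.symm]
      exact hlt_iff _ _ hnev
  · have hvne : (x.2 ((x.1 ^ e) q)).val ≠ (x.2 ((x.1 ^ e) q')).val :=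
      fun h => hcc (ZMod.val_injective r h)
    by_cases hp : e % 2 = 0
    · rw [if_pos hp, if_pos hp, if_neg hcc, if_neg (fun h => hcc h.symm)]
      omega
    · rw [if_neg hp, if_neg hp, if_neg hcc, if_neg (fun h => hcc h.symm)]
      omega
lemma GtR_trans [NeZero r] {x : CP n r} (hcyc : ∀ q, 2 * k < (cycleSet x q).card)
    (ha : ∀ i, ((a i : Fin n) : ℕ) + 1 < n) :
    ∀ N q1 q2 q3, exitIdx a x q1 q2 + exitIdx a x q2 q3 ≤ N →
    q1 ≠ q2 → q2 ≠ q3 → q1 ≠ q3 →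
    SameBlock a q1 q2 → SameBlock a q2 q3 →
    GtR a x q1 q2 → GtR a x q2 q3 → GtR a x q1 q3 := by
  intro N
  induction N using Nat.strong_induction_on with
  | _ N ih =>
  intro q1 q2 q3 hsum h12 h23 h13 hsb12 hsb23 hg12 hg23
  by_cases hc12 : x.2 q1 = x.2 q2
  · by_cases hc23 : x.2 q2 = x.2 q3
    · have hc13 : x.2 q1 = x.2 q3 := hc12.trans hc23
      by_cases hb12 : SameBlock a (x.1 q1) (x.1 q2) <;>
        by_cases hb23 : SameBlock a (x.1 q2) (x.1 q3)
      · -- both next-level pairs in same block: recurse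
        have hsb13' : SameBlock a (x.1 q1) (x.1 q3) := sb_trans a hb12 hb23
        have hg12' : GtR a x (x.1 q2) (x.1 q1) :=
          (GtR_shift a hcyc ha h12 hc12 hb12).mp hg12
        have hg23' : GtR a x (x.1 q3) (x.1 q2) :=
          (GtR_shift a hcyc ha h23 hc23 hb23).mp hg23
        have he12 := exitIdx_shift a hcyc ha h12 hc12 hb12
        have he23 := exitIdx_shift a hcyc ha h23 hc23 hb23
        have hs1 : exitIdx a x (x.1 q3) (x.1 q2) = exitIdx a x (x.1 q2) (x.1 q3) :=
          exitIdx_symm a x _ _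
        have hs2 : exitIdx a x (x.1 q2) (x.1 q1) = exitIdx a x (x.1 q1) (x.1 q2) :=
          exitIdx_symm a x _ _
        have hNpos : 2 ≤ N := by omega
        have hres : GtR a x (x.1 q3) (x.1 q1) := by
          refine ih (N - 1) (by omega) (x.1 q3) (x.1 q2) (x.1 q1) ?_
            (fun h => h23 (x.1.injective h).symm)
            (fun h => h12 (x.1.injective h).symm)
            (fun h => h13 (x.1.injective h).symm)
            (sb_symm a hb23) (sb_symm a hb12) hg23' hg12'
          rw [hs1, hs2]; omega
        exact (GtR_shift a hcyc ha h13 hc13 hsb13').mpr hres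
      · have hv : x.1 q3 < x.1 q2 := (GtR_val a hc23 hb23).mp hg23
        have hb13 : ¬ SameBlock a (x.1 q1) (x.1 q3) :=
          fun h => hb23 (sb_trans a (sb_symm a hb12) h)
        have hlt : x.1 q3 < x.1 q1 := by
          rcases lt_or_ge (x.1 q3) (x.1 q1) with h | h
          · exact h
          · exfalso
            have hv' := Fin.lt_def.mp hv
            have h' := Fin.le_def.mp h
            exact hb13 (sb_interval a hb12 (by omega) (by omega))
        exact (GtR_val a hc13 hb13).mpr hlt
      · have hv : x.1 q2 < x.1 q1 := (GtR_val a hc12 hb12).mp hg12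
        have hb13 : ¬ SameBlock a (x.1 q1) (x.1 q3) :=
          fun h => hb12 (sb_trans a h (sb_symm a hb23))
        have hlt : x.1 q3 < x.1 q1 := by
          rcases lt_or_ge (x.1 q3) (x.1 q1) with h | h
          · exact h
          · exfalso
            have hv' := Fin.lt_def.mp hv
            have h' := Fin.le_def.mp h
            exact hb12 (sb_symm a (sb_interval a hb23 (by omega) (by omega)))
        exact (GtR_val a hc13 hb13).mpr hlt
      · have hv1 : x.1 q2 < x.1 q1 := (GtR_val a hc12 hb12).mp hg12
        have hv2 : x.1 q3 < x.1 q2 := (GtR_val a hc23 hb23).mp hg23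
        have hb13 : ¬ SameBlock a (x.1 q1) (x.1 q3) := by
          intro h
          have hv1' := Fin.lt_def.mp hv1
          have hv2' := Fin.lt_def.mp hv2
          exact hb12 (sb_interval a h (by omega) (by omega))
        exact (GtR_val a hc13 hb13).mpr (hv2.trans hv1)
    · have hv23 := (GtR_col a hc23).mp hg23
      have hc13 : x.2 q1 ≠ x.2 q3 := fun h => hc23 (hc12.symm.trans h)
      refine (GtR_col a hc13).mpr ?_
      rw [hc12]; exact hv23
  · have hv12 := (GtR_col a hc12).mp hg12
    by_cases hc23 : x.2 q2 = x.2 q3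
    · have hveq : (x.2 q3).val = (x.2 q2).val := by rw [hc23]
      have hc13 : x.2 q1 ≠ x.2 q3 := by
        intro h
        rw [h] at hv12
        omega
      exact (GtR_col a hc13).mpr (by omega)
    · have hv23 := (GtR_col a hc23).mp hg23
      have hc13 : x.2 q1 ≠ x.2 q3 := by
        intro h
        rw [h] at hv12
        omega
      exact (GtR_col a hc13).mpr (by omega)
def KGt (x : CP n r) (π : Equiv.Perm (Fin n)) (q q' : Fin n) : Prop :=
  (x.2 q').val < (x.2 q).val ∨ (x.2 q = x.2 q' ∧ π (x.1 q') < π (x.1 q))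

lemma KGt_trans {x : CP n r} {π : Equiv.Perm (Fin n)} {q1 q2 q3 : Fin n}
    (h1 : KGt x π q1 q2) (h2 : KGt x π q2 q3) : KGt x π q1 q3 := by
  rcases h1 with h1 | ⟨hc1, h1⟩ <;> rcases h2 with h2 | ⟨hc2, h2⟩
  · exact Or.inl (h2.trans h1)
  · refine Or.inl ?_
    have h3 : (x.2 q3).val = (x.2 q2).val := by rw [hc2]
    omega
  · refine Or.inl ?_
    have h3 : (x.2 q2).val = (x.2 q1).val := by rw [hc1]
    omega
  · exact Or.inr ⟨hc1.trans hc2, h2.trans h1⟩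

lemma KGt_asymm {x : CP n r} {π : Equiv.Perm (Fin n)} {q q' : Fin n}
    (h1 : KGt x π q q') (h2 : KGt x π q' q) : False := by
  rcases h1 with h1 | ⟨hc1, h1⟩ <;> rcases h2 with h2 | ⟨hc2, h2⟩
  · omega
  · rw [hc2] at h1; omega
  · rw [hc1] at h2; omega
  · exact absurd (h1.trans h2) (lt_irrefl _)

lemma KGt_total [NeZero r] {x : CP n r} {π : Equiv.Perm (Fin n)} {q q' : Fin n}
    (hne : q ≠ q') : KGt x π q q' ∨ KGt x π q' q := by
  by_cases hc : x.2 q = x.2 q'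
  · have hne2 : π (x.1 q') ≠ π (x.1 q) :=
      fun h => hne (x.1.injective (π.injective h)).symm
    rcases lt_or_gt_of_ne hne2 with h | h
    · exact Or.inl (Or.inr ⟨hc, h⟩)
    · exact Or.inr (Or.inr ⟨hc.symm, h⟩)
  · have : (x.2 q).val ≠ (x.2 q').val := fun h => hc (ZMod.val_injective r h)
    rcases lt_or_gt_of_ne this with h | h
    · exact Or.inr (Or.inl h)
    · exact Or.inl (Or.inl h)

lemma GtR_iff_KGt_of_G [NeZero r] {x : CP n r}
    (hcyc : ∀ q, 2 * k < (cycleSet x q).card)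
    (ha : ∀ i, ((a i : Fin n) : ℕ) + 1 < n)
    {π : Equiv.Perm (Fin n)} (hπ : ∀ p, SameBlock a p (π p))
    (hG : ∀ q q', q ≠ q' → SameBlock a q q' → (π q < π q' ↔ GtR a x q q'))
    {q q' : Fin n} (hne : q ≠ q') (hsb : SameBlock a q q') :
    GtR a x q q' ↔ KGt x π q q' := by
  by_cases hc : x.2 q = x.2 q'
  · have hveq : (x.2 q').val = (x.2 q).val := by rw [hc]
    have hK : KGt x π q q' ↔ π (x.1 q') < π (x.1 q) := by
      unfold KGt
      constructor
      · rintro (h | ⟨_, h⟩)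
        · omega
        · exact h
      · intro h; exact Or.inr ⟨hc, h⟩
    rw [hK]
    by_cases hb : SameBlock a (x.1 q) (x.1 q')
    · rw [GtR_shift a hcyc ha hne hc hb]
      exact (hG _ _ (fun h => hne (x.1.injective h).symm) (sb_symm a hb)).symm
    · rw [GtR_val a hc hb]
      exact (J_lt_iff a hπ (fun h => hb (sb_symm a h))).symm
  · rw [GtR_col a hc]
    unfold KGt
    constructor
    · exact Or.inl
    · rintro (h | ⟨h, _⟩)
      · exact h
      · exact absurd h hc

lemma GtR_iff_KGt_of_H [NeZero r] {x : CP n r}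
    (hcyc : ∀ q, 2 * k < (cycleSet x q).card)
    (ha : ∀ i, ((a i : Fin n) : ℕ) + 1 < n)
    {π : Equiv.Perm (Fin n)} (hπ : ∀ p, SameBlock a p (π p))
    (hH : ∀ q q', q ≠ q' → SameBlock a q q' → (π q < π q' ↔ KGt x π q q')) :
    ∀ N q q', exitIdx a x q q' ≤ N → q ≠ q' → SameBlock a q q' →
      (GtR a x q q' ↔ KGt x π q q') := by
  intro N
  induction N using Nat.strong_induction_on with
  | _ N ih =>
  intro q q' hNe hne hsb
  by_cases hc : x.2 q = x.2 q'
  · have hveq : (x.2 q').val = (x.2 q).val := by rw [hc]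
    have hK : KGt x π q q' ↔ π (x.1 q') < π (x.1 q) := by
      unfold KGt
      constructor
      · rintro (h | ⟨_, h⟩)
        · omega
        · exact h
      · intro h; exact Or.inr ⟨hc, h⟩
    by_cases hb : SameBlock a (x.1 q) (x.1 q')
    · rw [hK, GtR_shift a hcyc ha hne hc hb]
      have hne' : x.1 q' ≠ x.1 q := fun h => hne (x.1.injective h).symm
      have heN : exitIdx a x (x.1 q') (x.1 q) + 1 = exitIdx a x q q' := by
        rw [exitIdx_symm a x (x.1 q') (x.1 q)]
        exact (exitIdx_shift a hcyc ha hne hc hb).symm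
      have hNpos : 1 ≤ N := by omega
      have hrec := ih (N - 1) (by omega) (x.1 q') (x.1 q) (by omega) hne' (sb_symm a hb)
      rw [hrec]
      exact (hH _ _ hne' (sb_symm a hb)).symm
    · rw [hK, GtR_val a hc hb]
      exact (J_lt_iff a hπ (fun h => hb (sb_symm a h))).symm
  · rw [GtR_col a hc]
    unfold KGt
    constructor
    · exact Or.inl
    · rintro (h | ⟨h, _⟩)
      · exact h
      · exact absurd h hc

lemma G_iff_H [NeZero r] {x : CP n r}
    (hcyc : ∀ q, 2 * k < (cycleSet x q).card)
    (ha : ∀ i, ((a i : Fin n) : ℕ) + 1 < n)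
    {π : Equiv.Perm (Fin n)} (hπ : ∀ p, SameBlock a p (π p)) :
    (∀ q q', q ≠ q' → SameBlock a q q' → (π q < π q' ↔ GtR a x q q')) ↔
    (∀ q q', q ≠ q' → SameBlock a q q' → (π q < π q' ↔ KGt x π q q')) := by
  constructor
  · intro hG q q' hne hsb
    rw [hG q q' hne hsb]
    exact GtR_iff_KGt_of_G a hcyc ha hπ hG hne hsb
  · intro hH q q' hne hsb
    rw [hH q q' hne hsb]
    exact (GtR_iff_KGt_of_H a hcyc ha hπ hH (exitIdx a x q q') q q' le_rfl hne hsb).symm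
lemma descent_iff_H [NeZero r] {x : CP n r}
    (ha : ∀ i, ((a i : Fin n) : ℕ) + 1 < n)
    {π : Equiv.Perm (Fin n)} (hπ : ∀ p, SameBlock a p (π p)) :
    (∀ i, IsDescent (conjP π x) (a i)) ↔
    (∀ q q', q ≠ q' → SameBlock a q q' → (π q < π q' ↔ KGt x π q q')) := by
  constructor
  · intro hs
    have hadj : ∀ (c : Fin n) (hlt : (c : ℕ) + 1 < n),
        SameBlock a c ⟨c.val + 1, hlt⟩ → KGt x π (π⁻¹ c) (π⁻¹ ⟨c.val + 1, hlt⟩) := by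
      intro c hlt hsbc
      obtain ⟨i, hi⟩ := sb_cut a hsbc rfl
      subst hi
      have hd := hs i
      rw [IsDescent, dif_pos hlt] at hd
      unfold conjP at hd
      simp only [Equiv.Perm.mul_apply] at hd
      exact hd
    have hchain : ∀ d : ℕ, ∀ s t : Fin n, t.val = s.val + d + 1 → SameBlock a s t →
        KGt x π (π⁻¹ s) (π⁻¹ t) := by
      intro d
      induction d with
      | zero =>
          intro s t ht hsb
          have hlt : s.val + 1 < n := by have := t.is_lt; omega
          have htt : t = ⟨s.val + 1, hlt⟩ := Fin.ext (show t.val = s.val + 1 by omega)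
          subst htt
          exact hadj s hlt hsb
      | succ d ihd =>
          intro s t ht hsb
          have hmidlt : s.val + d + 1 < n := by have := t.is_lt; omega
          have hsm : SameBlock a s ⟨s.val + d + 1, hmidlt⟩ :=
            sb_interval a hsb (by simp; omega) (by simp; omega)
          have h1 := ihd s ⟨s.val + d + 1, hmidlt⟩ rfl hsm
          have hlt2 : (s.val + d + 1) + 1 < n := by have := t.is_lt; omega
          have hmt : SameBlock a (⟨s.val + d + 1, hmidlt⟩ : Fin n)
              ⟨(s.val + d + 1) + 1, hlt2⟩ := by
            have h3 : SameBlock a s ⟨(s.val + d + 1) + 1, hlt2⟩ :=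
              sb_interval a hsb (by simp; omega) (by simp; omega)
            exact sb_trans a (sb_symm a hsm) h3
          have h2 := hadj ⟨s.val + d + 1, hmidlt⟩ hlt2 hmt
          have htt : t = ⟨(s.val + d + 1) + 1, hlt2⟩ :=
            Fin.ext (show t.val = (s.val + d + 1) + 1 by omega)
          subst htt
          exact KGt_trans h1 h2
    intro q q' hne hsb
    have hchain2 : ∀ u v : Fin n, u < v → SameBlock a u v → KGt x π (π⁻¹ u) (π⁻¹ v) := by
      intro u v huv hsbuv
      have huv' := Fin.lt_def.mp huv
      exact hchain (v.val - u.val - 1) u v (by omega) hsbuv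
    constructor
    · intro hlt
      have hsbp : SameBlock a (π q) (π q') :=
        sb_trans a (sb_symm a (hπ q)) (sb_trans a hsb (hπ q'))
      have := hchain2 (π q) (π q') hlt hsbp
      simpa using this
    · intro hK
      rcases lt_trichotomy (π q) (π q') with h | h | h
      · exact h
      · exact absurd (π.injective h) hne
      · exfalso
        have hsbp : SameBlock a (π q') (π q) :=
          sb_trans a (sb_symm a (hπ q')) (sb_trans a (sb_symm a hsb) (hπ q))
        have := hchain2 (π q') (π q) h hsbp
        simp only [perm_inv_apply_self] at this
        exact KGt_asymm hK this
  · intro hH i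
    have hlt := ha i
    have hsbp : SameBlock a (a i) ⟨(a i).val + 1, hlt⟩ := sb_adj a ⟨i, rfl⟩ rfl
    have hq : SameBlock a (π⁻¹ (a i)) (π⁻¹ (⟨(a i).val + 1, hlt⟩ : Fin n)) := by
      have h1 : SameBlock a (π⁻¹ (a i)) (a i) := by
        have := hπ (π⁻¹ (a i)); rwa [perm_apply_inv_self] at this
      have h2 : SameBlock a (π⁻¹ (⟨(a i).val + 1, hlt⟩ : Fin n)) ⟨(a i).val + 1, hlt⟩ := by
        have := hπ (π⁻¹ (⟨(a i).val + 1, hlt⟩ : Fin n))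
        rwa [perm_apply_inv_self] at this
      exact sb_trans a h1 (sb_trans a hsbp (sb_symm a h2))
    have hnep : (a i) ≠ (⟨(a i).val + 1, hlt⟩ : Fin n) := by
      intro h
      have := congrArg Fin.val h
      simp at this
    have hne : π⁻¹ (a i) ≠ π⁻¹ (⟨(a i).val + 1, hlt⟩ : Fin n) :=
      fun h => hnep (π⁻¹.injective h)
    have hππ : π (π⁻¹ (a i)) < π (π⁻¹ (⟨(a i).val + 1, hlt⟩ : Fin n)) := by
      simp only [perm_apply_inv_self]
      exact Fin.lt_def.mpr (by simp)
    have hK := (hH _ _ hne hq).mp hππ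
    rw [IsDescent, dif_pos hlt]
    unfold conjP
    simp only [Equiv.Perm.mul_apply]
    exact hK
noncomputable def rankU (x : CP n r) (q : Fin n) : ℕ :=
  ((blockOf a q).filter (fun z => GtR a x z q)).card

lemma rankU_lt (x : CP n r) (q : Fin n) : rankU a x q < (blockOf a q).card := by
  apply Finset.card_lt_card
  rw [Finset.ssubset_iff_of_subset (Finset.filter_subset _ _)]
  exact ⟨q, self_mem_blockOf a q, by simp [GtR_irrefl]⟩

lemma rankU_lt_of_GtR [NeZero r] {x : CP n r}
    (hcyc : ∀ q, 2 * k < (cycleSet x q).card)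
    (ha : ∀ i, ((a i : Fin n) : ℕ) + 1 < n)
    {q q' : Fin n} (hne : q ≠ q') (hsb : SameBlock a q q') (hgt : GtR a x q q') :
    rankU a x q < rankU a x q' := by
  have hb : blockOf a q = blockOf a q' := blockOf_eq a hsb
  apply Finset.card_lt_card
  rw [Finset.ssubset_iff_of_subset]
  · refine ⟨q, ?_, ?_⟩
    · rw [Finset.mem_filter]
      exact ⟨hb ▸ self_mem_blockOf a q, hgt⟩
    · simp [GtR_irrefl]
  · intro z hz
    rw [Finset.mem_filter] at hz ⊢
    obtain ⟨hz1, hz2⟩ := hz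
    refine ⟨hb ▸ hz1, ?_⟩
    have hzq : z ≠ q := fun h => GtR_irrefl a x q (h ▸ hz2)
    have hzq' : z ≠ q' := by
      intro h
      subst h
      exact ((GtR_total a hne).mp hgt) hz2
    have hsbzq : SameBlock a z q := sb_symm a ((mem_blockOf a).mp hz1)
    exact GtR_trans a hcyc ha (exitIdx a x z q + exitIdx a x q q') z q q' le_rfl
      hzq hne hzq' hsbzq hsb hz2 hgt

lemma rankU_lt_iff [NeZero r] {x : CP n r}
    (hcyc : ∀ q, 2 * k < (cycleSet x q).card)
    (ha : ∀ i, ((a i : Fin n) : ℕ) + 1 < n)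
    {q q' : Fin n} (hne : q ≠ q') (hsb : SameBlock a q q') :
    rankU a x q < rankU a x q' ↔ GtR a x q q' := by
  constructor
  · intro h
    by_contra hng
    have hgt' : GtR a x q' q := by
      have := GtR_total a (x := x) hne
      tauto
    have := rankU_lt_of_GtR a hcyc ha (Ne.symm hne) (sb_symm a hsb) hgt'
    omega
  · exact rankU_lt_of_GtR a hcyc ha hne hsb
noncomputable def sortFun (x : CP n r) (q : Fin n) : Fin n :=
  ((blockOf a q).sort (· ≤ ·))[rankU a x q]'
    (by rw [Finset.length_sort]; exact rankU_lt a x q)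

lemma sortFun_mem (x : CP n r) (q : Fin n) : sortFun a x q ∈ blockOf a q := by
  rw [← Finset.mem_sort (α := Fin n) (· ≤ ·)]
  exact List.getElem_mem _

lemma sortFun_sb (x : CP n r) (q : Fin n) : SameBlock a q (sortFun a x q) :=
  (mem_blockOf a).mp (sortFun_mem a x q)

lemma getElem_lt_getElem_iff {l : List (Fin n)} (hs : l.Pairwise (· < ·))
    {i j : ℕ} (hi : i < l.length) (hj : j < l.length) :
    l[i] < l[j] ↔ i < j := by
  constructor
  · intro h
    by_contra hc
    push_neg at hc
    rcases Nat.lt_or_ge j i with h' | h'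
    · have := hs.rel_get_of_lt (a := ⟨j, hj⟩) (b := ⟨i, hi⟩) h'
      simp only [List.get_eq_getElem] at this
      exact absurd (h.trans this) (lt_irrefl _)
    · have : i = j := le_antisymm h' hc
      subst this
      exact absurd h (lt_irrefl _)
  · intro h
    have := hs.rel_get_of_lt (a := ⟨i, hi⟩) (b := ⟨j, hj⟩) h
    simpa using this

lemma sortFun_lt_iff [NeZero r] {x : CP n r}
    (hcyc : ∀ q, 2 * k < (cycleSet x q).card)
    (ha : ∀ i, ((a i : Fin n) : ℕ) + 1 < n)
    {q q' : Fin n} (hne : q ≠ q') (hsb : SameBlock a q q') :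
    sortFun a x q < sortFun a x q' ↔ GtR a x q q' := by
  have hb : blockOf a q' = blockOf a q := (blockOf_eq a hsb).symm
  rw [← rankU_lt_iff a hcyc ha hne hsb]
  unfold sortFun
  simp only [hb]
  exact getElem_lt_getElem_iff (Finset.sortedLT_sort _).pairwise _ _

lemma sortFun_inj [NeZero r] {x : CP n r}
    (hcyc : ∀ q, 2 * k < (cycleSet x q).card)
    (ha : ∀ i, ((a i : Fin n) : ℕ) + 1 < n) :
    Function.Injective (sortFun a x) := by
  intro q q' hf
  by_contra hne
  have hsb : SameBlock a q q' :=
    sb_trans a (sortFun_sb a x q) (hf ▸ sb_symm a (sortFun_sb a x q'))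
  have htot : GtR a x q q' ∨ GtR a x q' q := by
    have := GtR_total a (x := x) hne
    tauto
  rcases htot with h | h
  · have := (sortFun_lt_iff a hcyc ha hne hsb).mpr h
    rw [hf] at this
    exact absurd this (lt_irrefl _)
  · have := (sortFun_lt_iff a hcyc ha (Ne.symm hne) (sb_symm a hsb)).mpr h
    rw [hf] at this
    exact absurd this (lt_irrefl _)

lemma exists_G [NeZero r] {x : CP n r}
    (hcyc : ∀ q, 2 * k < (cycleSet x q).card)
    (ha : ∀ i, ((a i : Fin n) : ℕ) + 1 < n) :
    ∃ π : Equiv.Perm (Fin n), (∀ p, SameBlock a p (π p)) ∧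
      ∀ q q', q ≠ q' → SameBlock a q q' → (π q < π q' ↔ GtR a x q q') := by
  have hbij : Function.Bijective (sortFun a x) :=
    Finite.injective_iff_bijective.mp (sortFun_inj a hcyc ha)
  refine ⟨Equiv.ofBijective _ hbij, fun p => sortFun_sb a x p, ?_⟩
  intro q q' hne hsb
  exact sortFun_lt_iff a hcyc ha hne hsb

lemma G_unique [NeZero r] {x : CP n r}
    (hcyc : ∀ q, 2 * k < (cycleSet x q).card)
    (ha : ∀ i, ((a i : Fin n) : ℕ) + 1 < n)
    {π π' : Equiv.Perm (Fin n)}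
    (hπ : ∀ p, SameBlock a p (π p)) (hπ' : ∀ p, SameBlock a p (π' p))
    (hG : ∀ q q', q ≠ q' → SameBlock a q q' → (π q < π q' ↔ GtR a x q q'))
    (hG' : ∀ q q', q ≠ q' → SameBlock a q q' → (π' q < π' q' ↔ GtR a x q q')) :
    π = π' := by
  have hg : ∀ p, SameBlock a p ((π' * π⁻¹) p) := by
    intro z
    have h1 : SameBlock a (π⁻¹ z) z := by
      have := hπ (π⁻¹ z); rwa [perm_apply_inv_self] at this
    have h2 : SameBlock a (π⁻¹ z) (π' (π⁻¹ z)) := hπ' _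
    exact sb_trans a (sb_symm a h1) h2
  have hmono : ∀ z z' : Fin n, SameBlock a z z' → z < z' → (π' * π⁻¹) z < (π' * π⁻¹) z' := by
    intro z z' hsb hlt
    have hqq : π⁻¹ z ≠ π⁻¹ z' := fun h => absurd (π⁻¹.injective h ▸ hlt) (lt_irrefl _)
    have hsbq : SameBlock a (π⁻¹ z) (π⁻¹ z') := by
      have h1 : SameBlock a (π⁻¹ z) z := by
        have := hπ (π⁻¹ z); rwa [perm_apply_inv_self] at this
      have h2 : SameBlock a (π⁻¹ z') z' := by
        have := hπ (π⁻¹ z'); rwa [perm_apply_inv_self] at this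
      exact sb_trans a h1 (sb_trans a hsb (sb_symm a h2))
    have hgt : GtR a x (π⁻¹ z) (π⁻¹ z') := by
      rw [← hG _ _ hqq hsbq]
      simpa using hlt
    exact (hG' _ _ hqq hsbq).mpr hgt
  have hid : π' * π⁻¹ = 1 := J_increasing_eq_id a hg hmono
  have h := congrArg (fun f => f * π) hid
  simp only [mul_assoc] at h
  simpa [mul_assoc] using h.symm

end ColoredPerm

open ColoredPerm in
theorem orbit_structure (n r k : ℕ) [NeZero r] (a : Fin k → Fin n)
    (ha : ∀ i, (a i : ℕ) + 1 < n) (C : Finset (CP n r)) (hC : IsConjClass C)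
    (hshort : NoShortCycles C (2 * k)) :
    (Finset.univ.filter
        (fun π : Equiv.Perm (Fin n) => ∀ p, SameBlock a p (π p))).card =
      ∏ b ∈ blocks a, Nat.factorial b.card ∧
    ∀ x ∈ C,
      ((Finset.univ.filter
            (fun π : Equiv.Perm (Fin n) => ∀ p, SameBlock a p (π p))).image
          (fun π => cmul (cmul ((π, fun _ => 0) : CP n r) x) (cinv (π, fun _ => 0)))).card =
        (Finset.univ.filter
          (fun π : Equiv.Perm (Fin n) => ∀ p, SameBlock a p (π p))).card ∧
      ∃! y : CP n r,
        y ∈ ((Finset.univ.filter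
              (fun π : Equiv.Perm (Fin n) => ∀ p, SameBlock a p (π p))).image
            (fun π => cmul (cmul ((π, fun _ => 0) : CP n r) x) (cinv (π, fun _ => 0)))) ∧
          ∀ i, IsDescent y (a i) := by
  classical
  constructor
  · exact card_J a
  · intro x hx
    have hcyc : ∀ q, 2 * k < (cycleSet x q).card := cycle_big (hshort x hx)
    constructor
    · apply Finset.card_image_of_injOn
      intro π hπm π' hπ'm heq
      simp only at heq
      rw [conj_eq, conj_eq] at heq
      have h1 : ∀ p, SameBlock a p (π p) := by simpa using hπm
      have h2 : ∀ p, SameBlock a p (π' p) := by simpa using hπ'm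
      exact conj_injOn a ha hcyc h1 h2 (congrArg Prod.fst heq)
    · obtain ⟨π₀, hπ₀, hG₀⟩ := exists_G a hcyc ha
      have hπ₀m : π₀ ∈ Finset.univ.filter
          (fun π : Equiv.Perm (Fin n) => ∀ p, SameBlock a p (π p)) :=
        Finset.mem_filter.mpr ⟨Finset.mem_univ _, hπ₀⟩
      have hH₀ : ∀ q q', q ≠ q' → SameBlock a q q' → (π₀ q < π₀ q' ↔ KGt x π₀ q q') :=
        (G_iff_H a hcyc ha hπ₀).mp hG₀
      have hdesc : ∀ i, IsDescent (conjP π₀ x) (a i) := (descent_iff_H a ha hπ₀).mpr hH₀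
      refine ⟨cmul (cmul ((π₀, fun _ => 0) : CP n r) x) (cinv (π₀, fun _ => 0)),
        ⟨Finset.mem_image_of_mem _ hπ₀m, ?_⟩, ?_⟩
      · rw [conj_eq]
        exact hdesc
      · rintro y ⟨hymem, hydesc⟩
        obtain ⟨π, hπm, rfl⟩ := Finset.mem_image.mp hymem
        have hπ := (Finset.mem_filter.mp hπm).2
        rw [conj_eq] at hydesc
        have hH : ∀ q q', q ≠ q' → SameBlock a q q' → (π q < π q' ↔ KGt x π q q') :=
          (descent_iff_H a ha hπ).mp hydesc
        have hG : ∀ q q', q ≠ q' → SameBlock a q q' → (π q < π q' ↔ GtR a x q q') :=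
          (G_iff_H a hcyc ha hπ).mpr hH
        have hππ : π = π₀ := G_unique a hcyc ha hπ hπ₀ hG hG₀
        rw [hππ]
end

section
/- Let Z = X_{a₁}⋯X_{a_j}·Y_{a_{j+1},c_{j+1}}⋯Y_{a_k,c_k} with a₁,…,a_j ∈ [n-1], a_{j+1},…,a_k ∈ [n], colors c_{j+1},…,c_k ∈ ℤ_r. If a_k does not lie in the essential set of X_{a₁}⋯X_{a_j}Y_{a_{j+1},c_{j+1}}⋯Y_{a_{k-1},c_{k-1}} (i.e., a_k ∉ ∪_{i≤j}{a_i, a_i+1} ∪ {a_{j+1},…,a_{k-1}}), then E_{𝔖_{n,r}}[Z] = (1/r)·E_{𝔖_{n,r}}[X_{a₁}⋯X_{a_j}Y_{a_{j+1},c_{j+1}}⋯Y_{a_{k-1},c_{k-1}}]. -/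
open scoped Classical BigOperators

open ColoredPerm in
theorem fmaj_reduction (n r j k : ℕ) [NeZero r] (a : Fin j → Fin n)
    (ha : ∀ i, (a i : ℕ) + 1 < n) (b : Fin k → Fin n) (c : Fin k → ZMod r)
    (b₀ : Fin n) (c₀ : ZMod r)
    (hess : (∀ i, (b₀ : ℕ) ≠ (a i : ℕ) ∧ (b₀ : ℕ) ≠ (a i : ℕ) + 1) ∧ ∀ i, b₀ ≠ b i) :
    E Finset.univ (fun σ : CP n r =>
        (∏ i, X (a i) σ) * (∏ i, Y (b i) (c i) σ) * Y b₀ c₀ σ) =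
      (1 / (r : ℚ)) * E Finset.univ (fun σ : CP n r =>
        (∏ i, X (a i) σ) * ∏ i, Y (b i) (c i) σ) := by
  classical
  obtain ⟨h1, h2⟩ := hess
  set F : CP n r → ℚ := fun σ => (∏ i, X (a i) σ) * (∏ i, Y (b i) (c i) σ) with hF
  have hinv : ∀ (σ : CP n r) (f : Fin n → ZMod r), (∀ p, p ≠ b₀ → f p = σ.2 p) →
      F (σ.1, f) = F σ := by
    intro σ f hf
    simp only [hF]
    congr 1
    · refine Finset.prod_congr rfl fun i _ => ?_
      have hp1 : (a i) ≠ b₀ := Fin.ne_of_val_ne (Ne.symm (h1 i).1)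
      have hp2 : (⟨(a i : ℕ) + 1, ha i⟩ : Fin n) ≠ b₀ := Fin.ne_of_val_ne (Ne.symm (h1 i).2)
      simp only [X, IsDescent, dif_pos (ha i)]
      rw [hf _ hp1, hf _ hp2]
    · refine Finset.prod_congr rfl fun i _ => ?_
      simp only [Y]
      simp only [hf (b i) (fun h => h2 i h.symm)]
  have hr : (r : ℚ) ≠ 0 := Nat.cast_ne_zero.mpr (NeZero.ne r)
  have hshift : ∀ d : ZMod r,
      ∑ σ : CP n r, F σ * Y b₀ d σ = ∑ σ : CP n r, F σ * Y b₀ c₀ σ := by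
    intro d
    set g : Fin n → ZMod r := fun p => if p = b₀ then c₀ - d else 0 with hg
    refine Fintype.sum_equiv ((Equiv.refl (Equiv.Perm (Fin n))).prodCongr
      (Equiv.addRight g)) _ _ fun σ => ?_
    have he : ((Equiv.refl (Equiv.Perm (Fin n))).prodCongr (Equiv.addRight g)) σ
        = (σ.1, σ.2 + g) := rfl
    rw [he]
    have hFe : F (σ.1, σ.2 + g) = F σ := by
      refine hinv σ (σ.2 + g) fun p hp => ?_
      simp [hg, if_neg hp]
    rw [hFe]
    congr 1
    simp only [Y, hg]
    by_cases hb : σ.2 b₀ = d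
    · rw [if_pos hb, if_pos (by simp [hb])]
    · rw [if_neg hb, if_neg (by
        intro h
        simp only [Pi.add_apply, if_pos rfl] at h
        apply hb
        have := congrArg (· - (c₀ - d)) h
        simpa [sub_sub_cancel] using this)]
  have hsum : ∑ σ : CP n r, F σ = (r : ℚ) * ∑ σ : CP n r, F σ * Y b₀ c₀ σ := by
    have hone : ∀ σ : CP n r, F σ = ∑ d : ZMod r, F σ * Y b₀ d σ := by
      intro σ
      rw [← Finset.mul_sum]
      simp [Y, Finset.sum_ite_eq]
    calc ∑ σ : CP n r, F σ = ∑ σ : CP n r, ∑ d : ZMod r, F σ * Y b₀ d σ :=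
          Finset.sum_congr rfl fun σ _ => hone σ
      _ = ∑ d : ZMod r, ∑ σ : CP n r, F σ * Y b₀ d σ := Finset.sum_comm
      _ = ∑ _d : ZMod r, ∑ σ : CP n r, F σ * Y b₀ c₀ σ :=
          Finset.sum_congr rfl fun d _ => hshift d
      _ = (r : ℚ) * ∑ σ : CP n r, F σ * Y b₀ c₀ σ := by
          rw [Finset.sum_const, Finset.card_univ, ZMod.card, nsmul_eq_mul]
  have hL : (fun σ : CP n r =>
      (∏ i, X (a i) σ) * (∏ i, Y (b i) (c i) σ) * Y b₀ c₀ σ)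
      = fun σ => F σ * Y b₀ c₀ σ := rfl
  unfold E
  rw [hL, show (fun σ : CP n r => (∏ i, X (a i) σ) * ∏ i, Y (b i) (c i) σ) = F from rfl,
    hsum, mul_div_assoc, ← mul_assoc, one_div, inv_mul_cancel₀ hr, one_mul]
end
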